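/- arXiv:2204.06027 — 4 statements merged into one kernel-verified Lean document; each statement's English description precedes it below -/
import Mathlib

section
/- Let Sq be a square double complex of complex vector spaces. Then for all integers p, q, k, the k-th cohomology of the Schweitzer complex of Sq vanishes: H^k(L_{p,q}(Sq)) = 0. -/
open DirectSum

/-- A double complex of complex vector spaces: a family of `ℂ`-vector spaces `X r s`
(`r, s ∈ ℤ`) with differentials `∂ : X r s → X (r+1) s` and `∂̄ : X r s → X r (s+1)`
satisfying `∂∘∂ = 0`, `∂̄∘∂̄ = 0` and `∂∘∂̄ + ∂̄∘∂ = 0`. -/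
structure DoubleComplex : Type 1 where
  X : ℤ → ℤ → Type
  [acg : ∀ r s, AddCommGroup (X r s)]
  [mod : ∀ r s, Module ℂ (X r s)]
  d1 : ∀ r s, X r s →ₗ[ℂ] X (r + 1) s
  d2 : ∀ r s, X r s →ₗ[ℂ] X r (s + 1)
  d1_d1 : ∀ r s (x : X r s), d1 (r + 1) s (d1 r s x) = 0
  d2_d2 : ∀ r s (x : X r s), d2 r (s + 1) (d2 r s x) = 0
  anticomm : ∀ r s (x : X r s), d1 r (s + 1) (d2 r s x) + d2 (r + 1) s (d1 r s x) = 0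

attribute [instance] DoubleComplex.acg DoubleComplex.mod

/-- The bidegrees contributing to the degree-`k` piece of the Schweitzer complex `L_{p,q}`:
for `k ≤ p+q-2` the bidegrees `(r,s)` with `r+s = k`, `r < p`, `s < q`; for `k ≥ p+q-1`
the bidegrees `(r,s)` with `r+s = k+1`, `r ≥ p`, `s ≥ q`. -/
def schwCond (p q k : ℤ) (rs : ℤ × ℤ) : Prop :=
  (k ≤ p + q - 2 ∧ rs.1 + rs.2 = k ∧ rs.1 < p ∧ rs.2 < q) ∨
  (p + q - 1 ≤ k ∧ rs.1 + rs.2 = k + 1 ∧ p ≤ rs.1 ∧ q ≤ rs.2)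

instance (p q k : ℤ) : DecidablePred (schwCond p q k) := fun rs => by
  unfold schwCond; infer_instance

/-- Index type for the degree-`k` piece of the Schweitzer complex. -/
abbrev SchwIdx (p q k : ℤ) := {rs : ℤ × ℤ // schwCond p q k rs}

/-- The degree-`k` piece of the Schweitzer complex `L_{p,q}(A)`. -/
abbrev SchwL (A : DoubleComplex) (p q k : ℤ) : Type :=
  ⨁ i : SchwIdx p q k, A.X i.1.1 i.1.2

/-- The differential of the Schweitzer complex: in degrees `k ≤ p+q-3` the total
differential `∂ + ∂̄` followed by the projection to the components of `L^{k+1}`;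
in degree `p+q-2` the map `∂∂̄ : A^{p-1,q-1} → A^{p,q}`; in degrees `k ≥ p+q-1`
the total differential `∂ + ∂̄`. -/
noncomputable def schwD (A : DoubleComplex) (p q k : ℤ) :
    SchwL A p q k →ₗ[ℂ] SchwL A p q (k + 1) :=
  DirectSum.toModule ℂ _ _ fun i =>
    if _hk : k = p + q - 2 then
      (DirectSum.lof ℂ (SchwIdx p q (k + 1)) (fun j => A.X j.1.1 j.1.2)
        ⟨(i.1.1 + 1, i.1.2 + 1), by
          obtain ⟨⟨r, s⟩, hi⟩ := i
          simp only [schwCond] at hi ⊢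
          omega⟩).comp ((A.d1 i.1.1 (i.1.2 + 1)).comp (A.d2 i.1.1 i.1.2))
    else
      (if h : schwCond p q (k + 1) (i.1.1 + 1, i.1.2) then
        (DirectSum.lof ℂ (SchwIdx p q (k + 1)) (fun j => A.X j.1.1 j.1.2)
          ⟨(i.1.1 + 1, i.1.2), h⟩).comp (A.d1 i.1.1 i.1.2)
       else 0)
      +
      (if h : schwCond p q (k + 1) (i.1.1, i.1.2 + 1) then
        (DirectSum.lof ℂ (SchwIdx p q (k + 1)) (fun j => A.X j.1.1 j.1.2)
          ⟨(i.1.1, i.1.2 + 1), h⟩).comp (A.d2 i.1.1 i.1.2)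
       else 0)

/-- Transport of the pieces of the Schweitzer complex along an equality of degrees. -/
def schwLCast (A : DoubleComplex) (p q : ℤ) {k k' : ℤ} (h : k = k') :
    SchwL A p q k ≃ₗ[ℂ] SchwL A p q k' := by subst h; exact LinearEquiv.refl ℂ _

/-- The differential of the Schweitzer complex arriving in degree `k`. -/
noncomputable def schwDFrom (A : DoubleComplex) (p q k : ℤ) :
    SchwL A p q (k - 1) →ₗ[ℂ] SchwL A p q k :=
  (schwLCast A p q (by omega : k - 1 + 1 = k)).toLinearMap.comp (schwD A p q (k - 1))

/-- The `k`-th cohomology of the Schweitzer complex `L_{p,q}(A)`: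
`ker(d^k) / im(d^{k-1})`. -/
noncomputable abbrev SchwCoh (A : DoubleComplex) (p q k : ℤ) : Type :=
  LinearMap.ker (schwD A p q k) ⧸
    Submodule.comap (LinearMap.ker (schwD A p q k)).subtype
      (LinearMap.range (schwDFrom A p q k))



section Generic
variable {ι : Type*} [DecidableEq ι] {M : ι → Type*} [∀ i, AddCommGroup (M i)]

lemma ds_eq_single (x : ⨁ i, M i) (i₀ : ι) (h : ∀ j, j ≠ i₀ → Subsingleton (M j)) :
    x = DirectSum.of M i₀ (x i₀) := by
  refine DFinsupp.ext fun j => ?_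
  by_cases hj : j = i₀
  · subst hj; rw [DirectSum.of_eq_same]
  · rw [DirectSum.of_eq_of_ne _ _ _ hj]
    exact (h j hj).elim _ _

lemma ds_eq_pair (x : ⨁ i, M i) (i₀ i₁ : ι) (hne : i₀ ≠ i₁)
    (h : ∀ j, j ≠ i₀ → j ≠ i₁ → Subsingleton (M j)) :
    x = DirectSum.of M i₀ (x i₀) + DirectSum.of M i₁ (x i₁) := by
  refine DFinsupp.ext fun j => ?_
  rw [DirectSum.add_apply]
  by_cases hj : j = i₀
  · subst hj
    rw [DirectSum.of_eq_same, DirectSum.of_eq_of_ne _ _ _ hne, add_zero]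
  · by_cases hj1 : j = i₁
    · subst hj1
      rw [DirectSum.of_eq_same, DirectSum.of_eq_of_ne _ _ _ hne.symm, zero_add]
    · rw [DirectSum.of_eq_of_ne _ _ _ hj, DirectSum.of_eq_of_ne _ _ _ hj1]
      exact (h j hj hj1).elim _ _

omit [DecidableEq ι] in
lemma ds_subsingleton (h : ∀ i, Subsingleton (M i)) : Subsingleton (⨁ i, M i) :=
  ⟨fun x y => DFinsupp.ext fun j => (h j).elim _ _⟩
end Generic

section Comp
variable (A : DoubleComplex) (p q k : ℤ)

lemma schwCond_iff (r s : ℤ) : schwCond p q k (r, s) ↔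
    ((r + s = k ∧ r < p ∧ s < q) ∨ (r + s = k + 1 ∧ p ≤ r ∧ q ≤ s)) := by
  unfold schwCond; dsimp only; omega

lemma schwD_of_else (r s : ℤ) (hc : schwCond p q k (r, s)) (m : A.X r s)
    (hk : k ≠ p + q - 2) :
    schwD A p q k (DirectSum.of (fun j : SchwIdx p q k => A.X j.1.1 j.1.2) ⟨(r, s), hc⟩ m) =
    (if h : schwCond p q (k + 1) (r + 1, s) then
        DirectSum.of (fun j : SchwIdx p q (k + 1) => A.X j.1.1 j.1.2) ⟨(r + 1, s), h⟩
          (A.d1 r s m)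
     else 0) +
    (if h : schwCond p q (k + 1) (r, s + 1) then
        DirectSum.of (fun j : SchwIdx p q (k + 1) => A.X j.1.1 j.1.2) ⟨(r, s + 1), h⟩
          (A.d2 r s m)
     else 0) := by
  rw [← DirectSum.lof_eq_of ℂ]
  unfold schwD
  rw [DirectSum.toModule_lof, dif_neg hk]
  rw [LinearMap.add_apply]
  congr 1
  · split_ifs with h
    · rw [LinearMap.comp_apply, ← DirectSum.lof_eq_of ℂ]
    · rfl
  · split_ifs with h
    · rw [LinearMap.comp_apply, ← DirectSum.lof_eq_of ℂ]
    · rfl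

lemma schwD_of_corner (r s : ℤ) (hc : schwCond p q k (r, s)) (m : A.X r s)
    (hk : k = p + q - 2) (h' : schwCond p q (k + 1) (r + 1, s + 1)) :
    schwD A p q k (DirectSum.of (fun j : SchwIdx p q k => A.X j.1.1 j.1.2) ⟨(r, s), hc⟩ m) =
    DirectSum.of (fun j : SchwIdx p q (k + 1) => A.X j.1.1 j.1.2) ⟨(r + 1, s + 1), h'⟩
      (A.d1 r (s + 1) (A.d2 r s m)) := by
  rw [← DirectSum.lof_eq_of ℂ]
  unfold schwD
  rw [DirectSum.toModule_lof, dif_pos hk]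
  rw [← DirectSum.lof_eq_of ℂ]
  rfl

lemma schwLCast_of {k k' : ℤ} (h : k = k') (r s : ℤ) (hc : schwCond p q k (r, s))
    (hc' : schwCond p q k' (r, s)) (m : A.X r s) :
    schwLCast A p q h
      (DirectSum.of (fun j : SchwIdx p q k => A.X j.1.1 j.1.2) ⟨(r, s), hc⟩ m) =
    DirectSum.of (fun j : SchwIdx p q k' => A.X j.1.1 j.1.2) ⟨(r, s), hc'⟩ m := by
  subst h; rfl

lemma schwDFrom_apply (y : SchwL A p q (k - 1)) :
    schwDFrom A p q k y =
      schwLCast A p q (by omega : k - 1 + 1 = k) (schwD A p q (k - 1) y) := rfl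

lemma dite_of_apply_ne (r' s' : ℤ) (m : A.X r' s') (j : SchwIdx p q k)
    (hne : j.1 ≠ (r', s')) :
    (if h : schwCond p q k (r', s') then
        DirectSum.of (fun j : SchwIdx p q k => A.X j.1.1 j.1.2) ⟨(r', s'), h⟩ m
     else 0) j = 0 := by
  split_ifs with h
  · exact DirectSum.of_eq_of_ne _ _ _ (fun e => hne (congrArg Subtype.val e))
  · rfl

lemma dite_of_apply_same (r' s' : ℤ) (m : A.X r' s') (h : schwCond p q k (r', s')) :
    (if h : schwCond p q k (r', s') then
        DirectSum.of (fun j : SchwIdx p q k => A.X j.1.1 j.1.2) ⟨(r', s'), h⟩ m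
     else 0) ⟨(r', s'), h⟩ = m := by
  rw [dif_pos h, DirectSum.of_eq_same]

lemma dite_of_eq_zero (r' s' : ℤ) (m : A.X r' s') (hm : m = 0) :
    (if h : schwCond p q k (r', s') then
        DirectSum.of (fun j : SchwIdx p q k => A.X j.1.1 j.1.2) ⟨(r', s'), h⟩ m
     else 0) = 0 := by
  subst hm
  split_ifs with h
  · exact map_zero _
  · rfl

end Comp

section Sub
variable {Sq : DoubleComplex} {a b : ℤ} {p q k : ℤ}

lemma sub_single (hzero : ∀ r s : ℤ, ¬((r = a ∨ r = a + 1) ∧ (s = b ∨ s = b + 1)) → Subsingleton (Sq.X r s)) (r₀ s₀ : ℤ) (c₀ : schwCond p q k (r₀, s₀))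
    (h : ∀ r s : ℤ, ((r = a ∨ r = a + 1) ∧ (s = b ∨ s = b + 1)) → schwCond p q k (r, s) →
      r = r₀ ∧ s = s₀) :
    ∀ j : SchwIdx p q k, j ≠ ⟨(r₀, s₀), c₀⟩ → Subsingleton (Sq.X j.1.1 j.1.2) := by
  rintro ⟨⟨r, s⟩, hj⟩ hne
  refine hzero r s fun hcon => hne (Subtype.ext ?_)
  obtain ⟨h1, h2⟩ := h r s hcon hj
  exact Prod.ext_iff.mpr ⟨h1, h2⟩

lemma sub_pair (hzero : ∀ r s : ℤ, ¬((r = a ∨ r = a + 1) ∧ (s = b ∨ s = b + 1)) → Subsingleton (Sq.X r s)) (r₀ s₀ r₁ s₁ : ℤ) (c₀ : schwCond p q k (r₀, s₀)) (c₁ : schwCond p q k (r₁, s₁))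
    (h : ∀ r s : ℤ, ((r = a ∨ r = a + 1) ∧ (s = b ∨ s = b + 1)) → schwCond p q k (r, s) →
      (r = r₀ ∧ s = s₀) ∨ (r = r₁ ∧ s = s₁)) :
    ∀ j : SchwIdx p q k, j ≠ ⟨(r₀, s₀), c₀⟩ → j ≠ ⟨(r₁, s₁), c₁⟩ →
      Subsingleton (Sq.X j.1.1 j.1.2) := by
  rintro ⟨⟨r, s⟩, hj⟩ hne₀ hne₁
  refine hzero r s fun hcon => ?_
  rcases h r s hcon hj with ⟨h1, h2⟩ | ⟨h1, h2⟩
  · exact hne₀ (Subtype.ext (Prod.ext_iff.mpr ⟨h1, h2⟩))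
  · exact hne₁ (Subtype.ext (Prod.ext_iff.mpr ⟨h1, h2⟩))

lemma triv_case (p q k : ℤ)
    (hall : ∀ i : SchwIdx p q k, Subsingleton (Sq.X i.1.1 i.1.2)) (x : SchwL Sq p q k) :
    ∃ y, schwDFrom Sq p q k y = x :=
  ⟨0, by rw [map_zero]; exact @Subsingleton.elim _ (ds_subsingleton hall) 0 x⟩
end Sub

lemma schw_key (Sq : DoubleComplex) (a b : ℤ)
    (hzero : ∀ r s : ℤ, ¬((r = a ∨ r = a + 1) ∧ (s = b ∨ s = b + 1)) → Subsingleton (Sq.X r s))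
    (hd1a : Function.Bijective (Sq.d1 a b))
    (hd1b : Function.Bijective (Sq.d1 a (b + 1)))
    (hd2a : Function.Bijective (Sq.d2 a b))
    (hd2b : Function.Bijective (Sq.d2 (a + 1) b))
    (p q k : ℤ) (x : SchwL Sq p q k) (hx : schwD Sq p q k x = 0) :
    ∃ y, schwDFrom Sq p q k y = x := by
  by_cases hk₁ : k = a + b - 1
  -- ==================== degree a+b-1 ====================
  · subst hk₁
    by_cases hpq : p ≤ a ∧ q ≤ b
    · have c₀ : schwCond p q (a + b - 1) (a, b) := by rw [schwCond_iff]; omega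
      have hxdec := ds_eq_single x ⟨(a, b), c₀⟩ (sub_single hzero a b c₀ (by
        intro r s hcon hsc; rw [schwCond_iff] at hsc; omega))
      rw [hxdec, schwD_of_else Sq p q _ a b c₀ _ (by omega)] at hx
      have c₁ : schwCond p q (a + b - 1 + 1) (a + 1, b) := by rw [schwCond_iff]; omega
      have hcomp := DFunLike.congr_fun hx ⟨(a + 1, b), c₁⟩
      rw [DirectSum.add_apply,
          dite_of_apply_same Sq p q _ (a + 1) b _ c₁,
          dite_of_apply_ne Sq p q _ a (b + 1) _ _
            (by show ((a : ℤ) + 1, b) ≠ (a, (b : ℤ) + 1); simp only [Ne, Prod.mk.injEq]; omega),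
          add_zero, DirectSum.zero_apply] at hcomp
      have hu0 : x ⟨(a, b), c₀⟩ = 0 := hd1a.1 (by rw [hcomp, map_zero])
      exact ⟨0, by rw [map_zero, hxdec, hu0, map_zero]⟩
    · refine triv_case p q (a + b - 1) (fun i => ?_) x
      obtain ⟨⟨r, s⟩, hj⟩ := i
      rw [schwCond_iff] at hj
      exact hzero r s (by omega)
  by_cases hk₂ : k = a + b
  -- ==================== degree a+b ====================
  · subst hk₂
    by_cases h1 : a + 1 ≤ p ∧ b + 1 ≤ q
    · -- single lower corner (a,b); x = 0 by injectivity
      have c₀ : schwCond p q (a + b) (a, b) := by rw [schwCond_iff]; omega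
      have hxdec := ds_eq_single x ⟨(a, b), c₀⟩ (sub_single hzero a b c₀ (by
        intro r s hcon hsc; rw [schwCond_iff] at hsc; omega))
      by_cases hc : a + b = p + q - 2
      · have c' : schwCond p q (a + b + 1) (a + 1, b + 1) := by rw [schwCond_iff]; omega
        rw [hxdec, schwD_of_corner Sq p q _ a b c₀ _ hc c'] at hx
        have hcomp := DFunLike.congr_fun hx ⟨(a + 1, b + 1), c'⟩
        rw [DirectSum.of_eq_same, DirectSum.zero_apply] at hcomp
        have h2z : Sq.d2 a b (x ⟨(a, b), c₀⟩) = 0 := hd1b.1 (by rw [hcomp, map_zero])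
        have hu0 : x ⟨(a, b), c₀⟩ = 0 := hd2a.1 (by rw [h2z, map_zero])
        exact ⟨0, by rw [map_zero, hxdec, hu0, map_zero]⟩
      · rw [hxdec, schwD_of_else Sq p q _ a b c₀ _ (by omega)] at hx
        by_cases hp2 : a + 2 ≤ p
        · have c₁ : schwCond p q (a + b + 1) (a + 1, b) := by rw [schwCond_iff]; omega
          have hcomp := DFunLike.congr_fun hx ⟨(a + 1, b), c₁⟩
          rw [DirectSum.add_apply,
              dite_of_apply_same Sq p q _ (a + 1) b _ c₁,
              dite_of_apply_ne Sq p q _ a (b + 1) _ _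
                (by show ((a : ℤ) + 1, b) ≠ (a, (b : ℤ) + 1); simp only [Ne, Prod.mk.injEq]; omega),
              add_zero, DirectSum.zero_apply] at hcomp
          have hu0 : x ⟨(a, b), c₀⟩ = 0 := hd1a.1 (by rw [hcomp, map_zero])
          exact ⟨0, by rw [map_zero, hxdec, hu0, map_zero]⟩
        · have c₂ : schwCond p q (a + b + 1) (a, b + 1) := by rw [schwCond_iff]; omega
          have hcomp := DFunLike.congr_fun hx ⟨(a, b + 1), c₂⟩
          rw [DirectSum.add_apply,
              dite_of_apply_ne Sq p q _ (a + 1) b _ _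
                (by show ((a : ℤ), (b : ℤ) + 1) ≠ (a + 1, b); simp only [Ne, Prod.mk.injEq]; omega),
              dite_of_apply_same Sq p q _ a (b + 1) _ c₂,
              zero_add, DirectSum.zero_apply] at hcomp
          have hu0 : x ⟨(a, b), c₀⟩ = 0 := hd2a.1 (by rw [hcomp, map_zero])
          exact ⟨0, by rw [map_zero, hxdec, hu0, map_zero]⟩
    · by_cases h2 : p ≤ a ∧ q ≤ b
      · -- pair of upper corners (a+1,b), (a,b+1); surject from (a,b)
        have c₀ : schwCond p q (a + b) (a + 1, b) := by rw [schwCond_iff]; omega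
        have c₁ : schwCond p q (a + b) (a, b + 1) := by rw [schwCond_iff]; omega
        have hne01 : (⟨(a + 1, b), c₀⟩ : SchwIdx p q (a + b)) ≠ ⟨(a, b + 1), c₁⟩ := by
          intro hcc; rw [Subtype.mk.injEq, Prod.mk.injEq] at hcc; omega
        have hxdec := ds_eq_pair x ⟨(a + 1, b), c₀⟩ ⟨(a, b + 1), c₁⟩ hne01
          (sub_pair hzero (a + 1) b a (b + 1) c₀ c₁ (by
            intro r s hcon hsc; rw [schwCond_iff] at hsc; omega))
        rw [hxdec, map_add, schwD_of_else Sq p q _ (a + 1) b c₀ _ (by omega),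
            schwD_of_else Sq p q _ a (b + 1) c₁ _ (by omega)] at hx
        have c₃ : schwCond p q (a + b + 1) (a + 1, b + 1) := by rw [schwCond_iff]; omega
        have hcomp := DFunLike.congr_fun hx ⟨(a + 1, b + 1), c₃⟩
        rw [DirectSum.add_apply, DirectSum.add_apply, DirectSum.add_apply,
            dite_of_apply_ne Sq p q _ (a + 1 + 1) b _ _
              (by show ((a : ℤ) + 1, (b : ℤ) + 1) ≠ (a + 1 + 1, b); simp only [Ne, Prod.mk.injEq]; omega),
            dite_of_apply_same Sq p q _ (a + 1) (b + 1) _ c₃,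
            dite_of_apply_same Sq p q _ (a + 1) (b + 1) _ c₃,
            dite_of_apply_ne Sq p q _ a (b + 1 + 1) _ _
              (by show ((a : ℤ) + 1, (b : ℤ) + 1) ≠ (a, b + 1 + 1); simp only [Ne, Prod.mk.injEq]; omega),
            zero_add, add_zero, DirectSum.zero_apply] at hcomp
        -- hcomp : d2 (a+1) b u + d1 a (b+1) v = 0
        have cy : schwCond p q (a + b - 1) (a, b) := by rw [schwCond_iff]; omega
        set w := (LinearEquiv.ofBijective (Sq.d1 a b) hd1a).symm (x ⟨(a + 1, b), c₀⟩) with hw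
        have hwu : Sq.d1 a b w = x ⟨(a + 1, b), c₀⟩ :=
          (LinearEquiv.ofBijective (Sq.d1 a b) hd1a).apply_symm_apply _
        have hwv : Sq.d2 a b w = x ⟨(a, b + 1), c₁⟩ := by
          apply hd1b.1
          have hanti := Sq.anticomm a b w
          rw [hwu] at hanti
          rw [eq_neg_of_add_eq_zero_left hanti, eq_neg_of_add_eq_zero_right hcomp]
        refine ⟨DirectSum.of (fun j : SchwIdx p q (a + b - 1) => Sq.X j.1.1 j.1.2) ⟨(a, b), cy⟩ w, ?_⟩
        have t₁ : schwCond p q (a + b - 1 + 1) (a + 1, b) := by rw [schwCond_iff]; omega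
        have t₂ : schwCond p q (a + b - 1 + 1) (a, b + 1) := by rw [schwCond_iff]; omega
        rw [schwDFrom_apply, schwD_of_else Sq p q _ a b cy _ (by omega),
            dif_pos t₁, dif_pos t₂, map_add,
            schwLCast_of Sq p q _ (a + 1) b t₁ c₀,
            schwLCast_of Sq p q _ a (b + 1) t₂ c₁, hwu, hwv]
        exact hxdec.symm
      · by_cases h3 : p = a + 1 ∧ q ≤ b
        · -- single upper corner (a+1,b); x = 0
          have c₀ : schwCond p q (a + b) (a + 1, b) := by rw [schwCond_iff]; omega
          have hxdec := ds_eq_single x ⟨(a + 1, b), c₀⟩ (sub_single hzero (a + 1) b c₀ (by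
            intro r s hcon hsc; rw [schwCond_iff] at hsc; omega))
          rw [hxdec, schwD_of_else Sq p q _ (a + 1) b c₀ _ (by omega)] at hx
          have c₃ : schwCond p q (a + b + 1) (a + 1, b + 1) := by rw [schwCond_iff]; omega
          have hcomp := DFunLike.congr_fun hx ⟨(a + 1, b + 1), c₃⟩
          rw [DirectSum.add_apply,
              dite_of_apply_ne Sq p q _ (a + 1 + 1) b _ _
                (by show ((a : ℤ) + 1, (b : ℤ) + 1) ≠ (a + 1 + 1, b); simp only [Ne, Prod.mk.injEq]; omega),
              dite_of_apply_same Sq p q _ (a + 1) (b + 1) _ c₃,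
              zero_add, DirectSum.zero_apply] at hcomp
          have hu0 : x ⟨(a + 1, b), c₀⟩ = 0 := hd2b.1 (by rw [hcomp, map_zero])
          exact ⟨0, by rw [map_zero, hxdec, hu0, map_zero]⟩
        · by_cases h4 : p ≤ a ∧ q = b + 1
          · -- single upper corner (a,b+1); x = 0
            have c₀ : schwCond p q (a + b) (a, b + 1) := by rw [schwCond_iff]; omega
            have hxdec := ds_eq_single x ⟨(a, b + 1), c₀⟩ (sub_single hzero a (b + 1) c₀ (by
              intro r s hcon hsc; rw [schwCond_iff] at hsc; omega))
            rw [hxdec, schwD_of_else Sq p q _ a (b + 1) c₀ _ (by omega)] at hx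
            have c₃ : schwCond p q (a + b + 1) (a + 1, b + 1) := by rw [schwCond_iff]; omega
            have hcomp := DFunLike.congr_fun hx ⟨(a + 1, b + 1), c₃⟩
            rw [DirectSum.add_apply,
                dite_of_apply_same Sq p q _ (a + 1) (b + 1) _ c₃,
                dite_of_apply_ne Sq p q _ a (b + 1 + 1) _ _
                  (by show ((a : ℤ) + 1, (b : ℤ) + 1) ≠ (a, b + 1 + 1); simp only [Ne, Prod.mk.injEq]; omega),
                add_zero, DirectSum.zero_apply] at hcomp
            have hu0 : x ⟨(a, b + 1), c₀⟩ = 0 := hd1b.1 (by rw [hcomp, map_zero])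
            exact ⟨0, by rw [map_zero, hxdec, hu0, map_zero]⟩
          · refine triv_case p q (a + b) (fun i => ?_) x
            obtain ⟨⟨r, s⟩, hj⟩ := i
            rw [schwCond_iff] at hj
            exact hzero r s (by omega)
  by_cases hk₃ : k = a + b + 1
  -- ==================== degree a+b+1 ====================
  · subst hk₃
    by_cases hA : a + 2 ≤ p ∧ b + 2 ≤ q
    · -- pair of lower corners (a+1,b), (a,b+1); surject from (a,b)
      have c₀ : schwCond p q (a + b + 1) (a + 1, b) := by rw [schwCond_iff]; omega
      have c₁ : schwCond p q (a + b + 1) (a, b + 1) := by rw [schwCond_iff]; omega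
      have hne01 : (⟨(a + 1, b), c₀⟩ : SchwIdx p q (a + b + 1)) ≠ ⟨(a, b + 1), c₁⟩ := by
        intro hcc; rw [Subtype.mk.injEq, Prod.mk.injEq] at hcc; omega
      have hxdec := ds_eq_pair x ⟨(a + 1, b), c₀⟩ ⟨(a, b + 1), c₁⟩ hne01
        (sub_pair hzero (a + 1) b a (b + 1) c₀ c₁ (by
          intro r s hcon hsc; rw [schwCond_iff] at hsc; omega))
      rw [hxdec, map_add, schwD_of_else Sq p q _ (a + 1) b c₀ _ (by omega),
          schwD_of_else Sq p q _ a (b + 1) c₁ _ (by omega)] at hx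
      have c₃ : schwCond p q (a + b + 1 + 1) (a + 1, b + 1) := by rw [schwCond_iff]; omega
      have hcomp := DFunLike.congr_fun hx ⟨(a + 1, b + 1), c₃⟩
      rw [DirectSum.add_apply, DirectSum.add_apply, DirectSum.add_apply,
          dite_of_apply_ne Sq p q _ (a + 1 + 1) b _ _
            (by show ((a : ℤ) + 1, (b : ℤ) + 1) ≠ (a + 1 + 1, b); simp only [Ne, Prod.mk.injEq]; omega),
          dite_of_apply_same Sq p q _ (a + 1) (b + 1) _ c₃,
          dite_of_apply_same Sq p q _ (a + 1) (b + 1) _ c₃,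
          dite_of_apply_ne Sq p q _ a (b + 1 + 1) _ _
            (by show ((a : ℤ) + 1, (b : ℤ) + 1) ≠ (a, b + 1 + 1); simp only [Ne, Prod.mk.injEq]; omega),
          zero_add, add_zero, DirectSum.zero_apply] at hcomp
      have cy : schwCond p q (a + b + 1 - 1) (a, b) := by rw [schwCond_iff]; omega
      set w := (LinearEquiv.ofBijective (Sq.d1 a b) hd1a).symm (x ⟨(a + 1, b), c₀⟩) with hw
      have hwu : Sq.d1 a b w = x ⟨(a + 1, b), c₀⟩ :=
        (LinearEquiv.ofBijective (Sq.d1 a b) hd1a).apply_symm_apply _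
      have hwv : Sq.d2 a b w = x ⟨(a, b + 1), c₁⟩ := by
        apply hd1b.1
        have hanti := Sq.anticomm a b w
        rw [hwu] at hanti
        rw [eq_neg_of_add_eq_zero_left hanti, eq_neg_of_add_eq_zero_right hcomp]
      refine ⟨DirectSum.of (fun j : SchwIdx p q (a + b + 1 - 1) => Sq.X j.1.1 j.1.2) ⟨(a, b), cy⟩ w, ?_⟩
      have t₁ : schwCond p q (a + b + 1 - 1 + 1) (a + 1, b) := by rw [schwCond_iff]; omega
      have t₂ : schwCond p q (a + b + 1 - 1 + 1) (a, b + 1) := by rw [schwCond_iff]; omega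
      rw [schwDFrom_apply, schwD_of_else Sq p q _ a b cy _ (by omega),
          dif_pos t₁, dif_pos t₂, map_add,
          schwLCast_of Sq p q _ (a + 1) b t₁ c₀,
          schwLCast_of Sq p q _ a (b + 1) t₂ c₁, hwu, hwv]
      exact hxdec.symm
    · by_cases hB : a + 2 ≤ p ∧ q = b + 1
      · -- single lower corner (a+1,b); surject from (a,b) via d1
        have c₀ : schwCond p q (a + b + 1) (a + 1, b) := by rw [schwCond_iff]; omega
        have hxdec := ds_eq_single x ⟨(a + 1, b), c₀⟩ (sub_single hzero (a + 1) b c₀ (by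
          intro r s hcon hsc; rw [schwCond_iff] at hsc; omega))
        have cy : schwCond p q (a + b + 1 - 1) (a, b) := by rw [schwCond_iff]; omega
        set w := (LinearEquiv.ofBijective (Sq.d1 a b) hd1a).symm (x ⟨(a + 1, b), c₀⟩) with hw
        have hwu : Sq.d1 a b w = x ⟨(a + 1, b), c₀⟩ :=
          (LinearEquiv.ofBijective (Sq.d1 a b) hd1a).apply_symm_apply _
        refine ⟨DirectSum.of (fun j : SchwIdx p q (a + b + 1 - 1) => Sq.X j.1.1 j.1.2) ⟨(a, b), cy⟩ w, ?_⟩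
        have t₁ : schwCond p q (a + b + 1 - 1 + 1) (a + 1, b) := by rw [schwCond_iff]; omega
        have t₂ : ¬schwCond p q (a + b + 1 - 1 + 1) (a, b + 1) := by rw [schwCond_iff]; omega
        rw [schwDFrom_apply, schwD_of_else Sq p q _ a b cy _ (by omega),
            dif_pos t₁, dif_neg t₂, add_zero,
            schwLCast_of Sq p q _ (a + 1) b t₁ c₀, hwu]
        exact hxdec.symm
      · by_cases hC : p = a + 1 ∧ b + 2 ≤ q
        · -- single lower corner (a,b+1); surject from (a,b) via d2
          have c₀ : schwCond p q (a + b + 1) (a, b + 1) := by rw [schwCond_iff]; omega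
          have hxdec := ds_eq_single x ⟨(a, b + 1), c₀⟩ (sub_single hzero a (b + 1) c₀ (by
            intro r s hcon hsc; rw [schwCond_iff] at hsc; omega))
          have cy : schwCond p q (a + b + 1 - 1) (a, b) := by rw [schwCond_iff]; omega
          set w := (LinearEquiv.ofBijective (Sq.d2 a b) hd2a).symm (x ⟨(a, b + 1), c₀⟩) with hw
          have hwu : Sq.d2 a b w = x ⟨(a, b + 1), c₀⟩ :=
            (LinearEquiv.ofBijective (Sq.d2 a b) hd2a).apply_symm_apply _
          refine ⟨DirectSum.of (fun j : SchwIdx p q (a + b + 1 - 1) => Sq.X j.1.1 j.1.2) ⟨(a, b), cy⟩ w, ?_⟩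
          have t₁ : ¬schwCond p q (a + b + 1 - 1 + 1) (a + 1, b) := by rw [schwCond_iff]; omega
          have t₂ : schwCond p q (a + b + 1 - 1 + 1) (a, b + 1) := by rw [schwCond_iff]; omega
          rw [schwDFrom_apply, schwD_of_else Sq p q _ a b cy _ (by omega),
              dif_neg t₁, dif_pos t₂, zero_add,
              schwLCast_of Sq p q _ a (b + 1) t₂ c₀, hwu]
          exact hxdec.symm
        · by_cases hD : p ≤ a + 1 ∧ q ≤ b + 1
          · -- single upper corner (a+1,b+1)
            have c₀ : schwCond p q (a + b + 1) (a + 1, b + 1) := by rw [schwCond_iff]; omega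
            have hxdec := ds_eq_single x ⟨(a + 1, b + 1), c₀⟩
              (sub_single hzero (a + 1) (b + 1) c₀ (by
                intro r s hcon hsc; rw [schwCond_iff] at hsc; omega))
            by_cases hD1 : p = a + 1 ∧ q = b + 1
            · -- image of d1 d2 from (a,b)
              have cy : schwCond p q (a + b + 1 - 1) (a, b) := by rw [schwCond_iff]; omega
              set w := (LinearEquiv.ofBijective (Sq.d2 a b) hd2a).symm
                ((LinearEquiv.ofBijective (Sq.d1 a (b + 1)) hd1b).symm
                  (x ⟨(a + 1, b + 1), c₀⟩)) with hw
              have hw2 : Sq.d2 a b w =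
                  (LinearEquiv.ofBijective (Sq.d1 a (b + 1)) hd1b).symm (x ⟨(a + 1, b + 1), c₀⟩) :=
                (LinearEquiv.ofBijective (Sq.d2 a b) hd2a).apply_symm_apply _
              have hwu : Sq.d1 a (b + 1) (Sq.d2 a b w) = x ⟨(a + 1, b + 1), c₀⟩ := by
                rw [hw2]
                exact (LinearEquiv.ofBijective (Sq.d1 a (b + 1)) hd1b).apply_symm_apply _
              refine ⟨DirectSum.of (fun j : SchwIdx p q (a + b + 1 - 1) => Sq.X j.1.1 j.1.2)
                ⟨(a, b), cy⟩ w, ?_⟩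
              have h' : schwCond p q (a + b + 1 - 1 + 1) (a + 1, b + 1) := by
                rw [schwCond_iff]; omega
              rw [schwDFrom_apply, schwD_of_corner Sq p q _ a b cy _ (by omega) h',
                  schwLCast_of Sq p q _ (a + 1) (b + 1) h' c₀, hwu]
              exact hxdec.symm
            · by_cases hD2 : p = a + 1
              · -- q ≤ b here; image of d2 from (a+1,b)
                have cy : schwCond p q (a + b + 1 - 1) (a + 1, b) := by rw [schwCond_iff]; omega
                set w := (LinearEquiv.ofBijective (Sq.d2 (a + 1) b) hd2b).symm
                  (x ⟨(a + 1, b + 1), c₀⟩) with hw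
                have hwu : Sq.d2 (a + 1) b w = x ⟨(a + 1, b + 1), c₀⟩ :=
                  (LinearEquiv.ofBijective (Sq.d2 (a + 1) b) hd2b).apply_symm_apply _
                refine ⟨DirectSum.of (fun j : SchwIdx p q (a + b + 1 - 1) => Sq.X j.1.1 j.1.2)
                  ⟨(a + 1, b), cy⟩ w, ?_⟩
                have t₂ : schwCond p q (a + b + 1 - 1 + 1) (a + 1, b + 1) := by
                  rw [schwCond_iff]; omega
                have hjunk : Sq.d1 (a + 1) b w = 0 :=
                  @Subsingleton.elim _ (hzero (a + 1 + 1) b (by omega)) _ _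
                rw [schwDFrom_apply, schwD_of_else Sq p q _ (a + 1) b cy _ (by omega),
                    dite_of_eq_zero Sq p q _ (a + 1 + 1) b _ hjunk, zero_add,
                    dif_pos t₂, schwLCast_of Sq p q _ (a + 1) (b + 1) t₂ c₀, hwu]
                exact hxdec.symm
              · -- p ≤ a here; image of d1 from (a,b+1)
                have cy : schwCond p q (a + b + 1 - 1) (a, b + 1) := by rw [schwCond_iff]; omega
                set w := (LinearEquiv.ofBijective (Sq.d1 a (b + 1)) hd1b).symm
                  (x ⟨(a + 1, b + 1), c₀⟩) with hw
                have hwu : Sq.d1 a (b + 1) w = x ⟨(a + 1, b + 1), c₀⟩ :=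
                  (LinearEquiv.ofBijective (Sq.d1 a (b + 1)) hd1b).apply_symm_apply _
                refine ⟨DirectSum.of (fun j : SchwIdx p q (a + b + 1 - 1) => Sq.X j.1.1 j.1.2)
                  ⟨(a, b + 1), cy⟩ w, ?_⟩
                have t₁ : schwCond p q (a + b + 1 - 1 + 1) (a + 1, b + 1) := by
                  rw [schwCond_iff]; omega
                have hjunk : Sq.d2 a (b + 1) w = 0 :=
                  @Subsingleton.elim _ (hzero a (b + 1 + 1) (by omega)) _ _
                rw [schwDFrom_apply, schwD_of_else Sq p q _ a (b + 1) cy _ (by omega),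
                    dite_of_eq_zero Sq p q _ a (b + 1 + 1) _ hjunk, add_zero,
                    dif_pos t₁, schwLCast_of Sq p q _ (a + 1) (b + 1) t₁ c₀, hwu]
                exact hxdec.symm
          · refine triv_case p q (a + b + 1) (fun i => ?_) x
            obtain ⟨⟨r, s⟩, hj⟩ := i
            rw [schwCond_iff] at hj
            exact hzero r s (by omega)
  by_cases hk₄ : k = a + b + 2
  -- ==================== degree a+b+2 ====================
  · subst hk₄
    by_cases hE : a + 2 ≤ p ∧ b + 2 ≤ q
    · -- single lower corner (a+1,b+1); surject from (a,b+1) via d1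
      have c₀ : schwCond p q (a + b + 2) (a + 1, b + 1) := by rw [schwCond_iff]; omega
      have hxdec := ds_eq_single x ⟨(a + 1, b + 1), c₀⟩
        (sub_single hzero (a + 1) (b + 1) c₀ (by
          intro r s hcon hsc; rw [schwCond_iff] at hsc; omega))
      have cy : schwCond p q (a + b + 2 - 1) (a, b + 1) := by rw [schwCond_iff]; omega
      set w := (LinearEquiv.ofBijective (Sq.d1 a (b + 1)) hd1b).symm
        (x ⟨(a + 1, b + 1), c₀⟩) with hw
      have hwu : Sq.d1 a (b + 1) w = x ⟨(a + 1, b + 1), c₀⟩ :=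
        (LinearEquiv.ofBijective (Sq.d1 a (b + 1)) hd1b).apply_symm_apply _
      refine ⟨DirectSum.of (fun j : SchwIdx p q (a + b + 2 - 1) => Sq.X j.1.1 j.1.2)
        ⟨(a, b + 1), cy⟩ w, ?_⟩
      have t₁ : schwCond p q (a + b + 2 - 1 + 1) (a + 1, b + 1) := by rw [schwCond_iff]; omega
      have hjunk : Sq.d2 a (b + 1) w = 0 :=
        @Subsingleton.elim _ (hzero a (b + 1 + 1) (by omega)) _ _
      rw [schwDFrom_apply, schwD_of_else Sq p q _ a (b + 1) cy _ (by omega),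
          dite_of_eq_zero Sq p q _ a (b + 1 + 1) _ hjunk, add_zero,
          dif_pos t₁, schwLCast_of Sq p q _ (a + 1) (b + 1) t₁ c₀, hwu]
      exact hxdec.symm
    · refine triv_case p q (a + b + 2) (fun i => ?_) x
      obtain ⟨⟨r, s⟩, hj⟩ := i
      rw [schwCond_iff] at hj
      exact hzero r s (by omega)
  -- ==================== other degrees ====================
  · refine triv_case p q k (fun i => ?_) x
    obtain ⟨⟨r, s⟩, hj⟩ := i
    rw [schwCond_iff] at hj
    exact hzero r s (by omega)

/-- The Schweitzer complex of a square has vanishing cohomology in all degrees.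
A square is a double complex concentrated in the four bidegrees
`(r₀,s₀), (r₀+1,s₀), (r₀,s₀+1), (r₀+1,s₀+1)`, one-dimensional (isomorphic to `ℂ`)
there, and whose four differentials between these components are isomorphisms. -/
theorem schwCoh_of_square_eq_zero (Sq : DoubleComplex) (r₀ s₀ : ℤ)
    (hone : ∀ r s : ℤ, (r = r₀ ∨ r = r₀ + 1) → (s = s₀ ∨ s = s₀ + 1) →
      Nonempty (Sq.X r s ≃ₗ[ℂ] ℂ))
    (hzero : ∀ r s : ℤ, ¬((r = r₀ ∨ r = r₀ + 1) ∧ (s = s₀ ∨ s = s₀ + 1)) →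
      Subsingleton (Sq.X r s))
    (hd1a : Function.Bijective (Sq.d1 r₀ s₀))
    (hd1b : Function.Bijective (Sq.d1 r₀ (s₀ + 1)))
    (hd2a : Function.Bijective (Sq.d2 r₀ s₀))
    (hd2b : Function.Bijective (Sq.d2 (r₀ + 1) s₀)) :
    ∀ p q k : ℤ, Subsingleton (SchwCoh Sq p q k) := by
  intro p q k
  rw [Submodule.Quotient.subsingleton_iff, Submodule.eq_top_iff']
  rintro ⟨x, hx⟩
  rw [Submodule.mem_comap]
  obtain ⟨y, hy⟩ := schw_key Sq r₀ s₀ hzero hd1a hd1b hd2a hd2b p q k x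
    (LinearMap.mem_ker.mp hx)
  exact ⟨y, hy⟩
end

section
/- For any double complex A of complex vector spaces and any integers p, q, there is a natural isomorphism H^{p+q−1}(L_{p,q}(A)) ≅ (ker(∂ : A^{p,q} → A^{p+1,q}) ∩ ker(∂̄ : A^{p,q} → A^{p,q+1})) / im(∂∂̄ : A^{p−1,q−1} → A^{p,q}), i.e. the (p+q−1)-st cohomology of the Schweitzer complex is the Bott–Chern cohomology of A in bidegree (p,q). -/
open DirectSum

/-- Transport of the components of a double complex along equalities of bidegrees. -/
noncomputable def DoubleComplex.castX (A : DoubleComplex) {r s r' s' : ℤ}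
    (h1 : r = r') (h2 : s = s') : A.X r s ≃ₗ[ℂ] A.X r' s' := by
  subst h1; subst h2; exact LinearEquiv.refl ℂ _

/-- The operator `∂∂̄ : A^{p-1,q-1} → A^{p,q}`. -/
noncomputable def ddbar (A : DoubleComplex) (p q : ℤ) :
    A.X (p - 1) (q - 1) →ₗ[ℂ] A.X p q :=
  (A.castX (show p - 1 + 1 = p by omega) (show q - 1 + 1 = q by omega)).toLinearMap.comp
    ((A.d1 (p - 1) (q - 1 + 1)).comp (A.d2 (p - 1) (q - 1)))

/-- The Bott–Chern cohomology of a double complex in bidegree `(p,q)`: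
`(ker ∂ ∩ ker ∂̄) / im ∂∂̄` at `A^{p,q}`. -/
noncomputable abbrev BottChern (A : DoubleComplex) (p q : ℤ) : Type :=
  ↥(LinearMap.ker (A.d1 p q) ⊓ LinearMap.ker (A.d2 p q)) ⧸
    Submodule.comap (LinearMap.ker (A.d1 p q) ⊓ LinearMap.ker (A.d2 p q)).subtype
      (LinearMap.range (ddbar A p q))


section Aux

open DirectSum

/-- Direct sum over an essentially unique index is the component. -/
noncomputable def uniqueLEquiv {ι : Type} [DecidableEq ι] (M : ι → Type)
    [∀ i, AddCommGroup (M i)] [∀ i, Module ℂ (M i)] (i0 : ι) (hu : ∀ i, i = i0) :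
    (⨁ i, M i) ≃ₗ[ℂ] M i0 :=
  { DirectSum.component ℂ ι M i0 with
    invFun := DirectSum.lof ℂ ι M i0
    left_inv := fun x => by
      refine DirectSum.ext (fun i => ?_)
      obtain rfl := hu i
      simp
      rfl
    right_inv := fun y => by simp }

@[simp] lemma uniqueLEquiv_apply {ι : Type} [DecidableEq ι] (M : ι → Type)
    [∀ i, AddCommGroup (M i)] [∀ i, Module ℂ (M i)] (i0 : ι) (hu : ∀ i, i = i0)
    (x : ⨁ i, M i) : uniqueLEquiv M i0 hu x = x i0 := rfl

@[simp] lemma uniqueLEquiv_symm_apply {ι : Type} [DecidableEq ι] (M : ι → Type)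
    [∀ i, AddCommGroup (M i)] [∀ i, Module ℂ (M i)] (i0 : ι) (hu : ∀ i, i = i0)
    (y : M i0) : (uniqueLEquiv M i0 hu).symm y = DirectSum.lof ℂ ι M i0 y := rfl

lemma schwLCast_lof (A : DoubleComplex) (p q : ℤ) {k k' : ℤ} (h : k = k')
    (i : SchwIdx p q k) (z : A.X i.1.1 i.1.2) :
    schwLCast A p q h (DirectSum.lof ℂ (SchwIdx p q k) (fun j => A.X j.1.1 j.1.2) i z)
      = DirectSum.lof ℂ (SchwIdx p q k') (fun j => A.X j.1.1 j.1.2)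
          ⟨i.1, by rw [← h]; exact i.2⟩ z := by
  subst h; rfl

lemma lof_congr (A : DoubleComplex) (p q k : ℤ) {r s r' s' : ℤ}
    (h1 : r = r') (h2 : s = s')
    (hc : schwCond p q k (r, s)) (hc' : schwCond p q k (r', s')) (z : A.X r s) :
    DirectSum.lof ℂ (SchwIdx p q k) (fun j => A.X j.1.1 j.1.2) ⟨(r, s), hc⟩ z
      = DirectSum.lof ℂ (SchwIdx p q k) (fun j => A.X j.1.1 j.1.2) ⟨(r', s'), hc'⟩
          (A.castX h1 h2 z) := by
  subst h1; subst h2; rfl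

end Aux


namespace SchwBC

open DirectSum

variable (A : DoubleComplex) (p q : ℤ)

/-- The unique index in degree `p+q-1`. -/
def i0 : SchwIdx p q (p + q - 1) :=
  ⟨(p, q), Or.inr ⟨by omega, by omega, le_refl p, le_refl q⟩⟩

lemma hu0 : ∀ i : SchwIdx p q (p + q - 1), i = i0 p q := by
  rintro ⟨⟨r, s⟩, h⟩
  simp only [schwCond] at h
  have hr : r = p ∧ s = q := by omega
  simp [i0, Prod.ext_iff, hr.1, hr.2]

/-- The unique index in degree `p+q-1-1`. -/
def i1 : SchwIdx p q (p + q - 1 - 1) :=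
  ⟨(p - 1, q - 1), Or.inl ⟨by omega, by omega, by omega, by omega⟩⟩

lemma hu1 : ∀ i : SchwIdx p q (p + q - 1 - 1), i = i1 p q := by
  rintro ⟨⟨r, s⟩, h⟩
  simp only [schwCond] at h
  have hr : r = p - 1 ∧ s = q - 1 := by omega
  simp [i1, Prod.ext_iff, hr.1, hr.2]

def j1 : SchwIdx p q (p + q - 1 + 1) :=
  ⟨(p + 1, q), Or.inr ⟨by omega, by omega, by omega, le_refl q⟩⟩

def j2 : SchwIdx p q (p + q - 1 + 1) :=
  ⟨(p, q + 1), Or.inr ⟨by omega, by omega, le_refl p, by omega⟩⟩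

lemma j1_ne_j2 : j1 p q ≠ j2 p q := by
  simp only [j1, j2, ne_eq, Subtype.mk.injEq, Prod.mk.injEq]
  intro h
  have := congrArg (fun x : SchwIdx p q (p + q - 1 + 1) => x.1.1) h
  dsimp only at this
  omega

noncomputable def e1 : SchwL A p q (p + q - 1) ≃ₗ[ℂ] A.X p q :=
  uniqueLEquiv (fun i : SchwIdx p q (p + q - 1) => A.X i.1.1 i.1.2) (i0 p q) (hu0 p q)

noncomputable def e2 : SchwL A p q (p + q - 1 - 1) ≃ₗ[ℂ] A.X (p - 1) (q - 1) :=
  uniqueLEquiv (fun i : SchwIdx p q (p + q - 1 - 1) => A.X i.1.1 i.1.2) (i1 p q) (hu1 p q)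

lemma D_lof (y : A.X p q) :
    schwD A p q (p + q - 1)
        (DirectSum.lof ℂ (SchwIdx p q (p + q - 1))
          (fun i => A.X i.1.1 i.1.2) (i0 p q) y)
      = DirectSum.lof ℂ (SchwIdx p q (p + q - 1 + 1))
          (fun i => A.X i.1.1 i.1.2) (j1 p q) (A.d1 p q y)
        + DirectSum.lof ℂ (SchwIdx p q (p + q - 1 + 1))
          (fun i => A.X i.1.1 i.1.2) (j2 p q) (A.d2 p q y) := by
  rw [schwD]
  erw [DirectSum.toModule_lof]
  simp only [i0]
  erw [dif_neg (by omega : ¬(p + q - 1 = p + q - 2))]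
  erw [dif_pos (show schwCond p q (p + q - 1 + 1) (p + 1, q) from (j1 p q).2),
    dif_pos (show schwCond p q (p + q - 1 + 1) (p, q + 1) from (j2 p q).2)]
  rfl

lemma Din_lof (z : A.X (p - 1) (q - 1)) :
    schwDFrom A p q (p + q - 1)
        (DirectSum.lof ℂ (SchwIdx p q (p + q - 1 - 1))
          (fun i => A.X i.1.1 i.1.2) (i1 p q) z)
      = DirectSum.lof ℂ (SchwIdx p q (p + q - 1))
          (fun i => A.X i.1.1 i.1.2) (i0 p q) (ddbar A p q z) := by
  rw [schwDFrom, LinearMap.comp_apply, LinearEquiv.coe_coe]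
  rw [schwD]
  erw [DirectSum.toModule_lof]
  simp only [i1]
  erw [dif_pos (by omega : p + q - 1 - 1 = p + q - 2)]
  erw [LinearMap.comp_apply, LinearMap.comp_apply, schwLCast_lof]
  simp only []
  rw [lof_congr A p q _ (show p - 1 + 1 = p by omega) (show q - 1 + 1 = q by omega)
    _ (i0 p q).2]
  rfl

end SchwBC

namespace SchwBC

variable (A : DoubleComplex) (p q : ℤ)

lemma hx (x : SchwL A p q (p + q - 1)) :
    x = DirectSum.lof ℂ (SchwIdx p q (p + q - 1)) (fun i => A.X i.1.1 i.1.2)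
        (i0 p q) (e1 A p q x) := by
  conv_lhs => rw [← (e1 A p q).symm_apply_apply x]
  rfl

lemma hker (x : SchwL A p q (p + q - 1)) :
    schwD A p q (p + q - 1) x = 0 ↔
      A.d1 p q (e1 A p q x) = 0 ∧ A.d2 p q (e1 A p q x) = 0 := by
  conv_lhs => rw [hx A p q x, D_lof]
  constructor
  · intro h
    constructor
    · have := congrArg (DirectSum.component ℂ _ _ (j1 p q)) h
      erw [map_add, DirectSum.component.lof_self, DirectSum.lof_eq_of ℂ _ _ (j2 p q),
        DirectSum.component.of, dif_neg (j1_ne_j2 p q).symm, add_zero] at this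
      exact this
    · have := congrArg (DirectSum.component ℂ _ _ (j2 p q)) h
      erw [map_add, DirectSum.component.lof_self, DirectSum.lof_eq_of ℂ _ _ (j1 p q),
        DirectSum.component.of, dif_neg (j1_ne_j2 p q), zero_add] at this
      exact this
  · rintro ⟨h1, h2⟩
    rw [h1, h2]
    erw [map_zero, map_zero, add_zero]

lemma claim1 :
    Submodule.map (e1 A p q : SchwL A p q (p + q - 1) →ₗ[ℂ] A.X p q)
        (LinearMap.ker (schwD A p q (p + q - 1)))
      = LinearMap.ker (A.d1 p q) ⊓ LinearMap.ker (A.d2 p q) := by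
  ext y
  simp only [Submodule.mem_map, LinearMap.mem_ker, Submodule.mem_inf]
  constructor
  · rintro ⟨x, hxk, rfl⟩
    exact (hker A p q x).mp hxk
  · rintro ⟨h1, h2⟩
    refine ⟨(e1 A p q).symm y, ?_, (e1 A p q).apply_symm_apply y⟩
    rw [hker A p q, (e1 A p q).apply_symm_apply]
    exact ⟨h1, h2⟩

lemma claim2 :
    Submodule.map (e1 A p q : SchwL A p q (p + q - 1) →ₗ[ℂ] A.X p q)
        (LinearMap.range (schwDFrom A p q (p + q - 1)))
      = LinearMap.range (ddbar A p q) := by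
  ext y
  simp only [Submodule.mem_map, LinearMap.mem_range]
  constructor
  · rintro ⟨x, ⟨w, rfl⟩, rfl⟩
    refine ⟨e2 A p q w, ?_⟩
    have hw : w = DirectSum.lof ℂ (SchwIdx p q (p + q - 1 - 1))
        (fun i => A.X i.1.1 i.1.2) (i1 p q) (e2 A p q w) := by
      conv_lhs => rw [← (e2 A p q).symm_apply_apply w]
      rfl
    conv_rhs => rw [hw, Din_lof]
    exact (DirectSum.lof_apply (M := fun i : SchwIdx p q (p + q - 1) => A.X i.1.1 i.1.2)
      ℂ (i0 p q) _).symm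
  · rintro ⟨z, rfl⟩
    refine ⟨schwDFrom A p q (p + q - 1)
      (DirectSum.lof ℂ (SchwIdx p q (p + q - 1 - 1))
        (fun i => A.X i.1.1 i.1.2) (i1 p q) z), ⟨_, rfl⟩, ?_⟩
    rw [Din_lof]
    exact DirectSum.lof_apply (M := fun i : SchwIdx p q (p + q - 1) => A.X i.1.1 i.1.2)
      ℂ (i0 p q) _

end SchwBC

/-- The `(p+q-1)`-st cohomology of the Schweitzer complex `L_{p,q}(A)` is the
Bott–Chern cohomology of `A` in bidegree `(p,q)`. -/
theorem schwCoh_bott_chern (A : DoubleComplex) (p q : ℤ) :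
    Nonempty (SchwCoh A p q (p + q - 1) ≃ₗ[ℂ] BottChern A p q) := by
  classical
  let E : LinearMap.ker (schwD A p q (p + q - 1)) ≃ₗ[ℂ]
      ↥(LinearMap.ker (A.d1 p q) ⊓ LinearMap.ker (A.d2 p q)) :=
    ((SchwBC.e1 A p q).submoduleMap (LinearMap.ker (schwD A p q (p + q - 1)))).trans
      (LinearEquiv.ofEq _ _ (SchwBC.claim1 A p q))
  have hE : ∀ x : LinearMap.ker (schwD A p q (p + q - 1)),
      (E x : A.X p q) = SchwBC.e1 A p q (x : SchwL A p q (p + q - 1)) := fun x => rfl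
  refine ⟨Submodule.Quotient.equiv _ _ E ?_⟩
  ext y
  simp only [Submodule.mem_map, Submodule.mem_comap, Submodule.subtype_apply]
  constructor
  · rintro ⟨x, hxm, rfl⟩
    rw [LinearEquiv.coe_coe, hE]
    rw [← SchwBC.claim2 A p q]
    exact Submodule.mem_map_of_mem hxm
  · intro hy
    rw [← SchwBC.claim2 A p q] at hy
    obtain ⟨v, hv, hev⟩ := hy
    have hvk : v ∈ LinearMap.ker (schwD A p q (p + q - 1)) := by
      have hyK : (y : A.X p q) ∈ Submodule.map
          ((SchwBC.e1 A p q : SchwL A p q (p + q - 1) →ₗ[ℂ] A.X p q))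
          (LinearMap.ker (schwD A p q (p + q - 1))) := by
        rw [SchwBC.claim1 A p q]; exact y.2
      obtain ⟨u, hu, heu⟩ := hyK
      have : u = v := (SchwBC.e1 A p q).injective (heu.trans hev.symm)
      exact this ▸ hu
    refine ⟨⟨v, hvk⟩, hv, ?_⟩
    apply Subtype.ext
    rw [LinearEquiv.coe_coe, hE]
    exact hev
end

section
/- Let n ≥ 0 and let A be a double complex of complex vector spaces with finite-dimensional components concentrated in bidegrees 0 ≤ r,s ≤ n, and suppose there is an isomorphism of double complexes A ≅ DA (bidegree-preserving linear isomorphisms commuting with the differentials). Then for all integers p, q, k there is an isomorphism H^k(L_{p,q}(A)) ≅ (H^{2n−k−1}(L_{n−p+1,n−q+1}(A)))^∨; equivalently, there is a perfect pairing H^k(L_{p,q}(A)) × H^{2n−k−1}(L_{n−p+1,n−q+1}(A)) → ℂ. This is the abstract form of Serre duality for Schweitzer cohomology. -/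
set_option maxHeartbeats 1000000
set_option synthInstance.maxHeartbeats 400000

open DirectSum

open Module

namespace SchwAux

variable (n : ℤ) (A : DoubleComplex)

lemma castX_rfl {r s : ℤ} : A.castX (rfl : r = r) (rfl : s = s) = LinearEquiv.refl ℂ _ := rfl

lemma schwLCast_rfl (p q k : ℤ) : schwLCast A p q (rfl : k = k) = LinearEquiv.refl ℂ _ := rfl

/-- dual index map -/
def dualIdx (p q k p₂ q₂ k₂ : ℤ) (hp : p + p₂ = n + 1) (hq : q + q₂ = n + 1)
    (hk : k + k₂ = 2 * n - 1) (i : SchwIdx p q k) : SchwIdx p₂ q₂ k₂ :=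
  ⟨(n - i.1.1, n - i.1.2), by
    obtain ⟨⟨r, s⟩, hc⟩ := i
    simp only [schwCond] at hc ⊢
    omega⟩

lemma dualIdx_dualIdx (p q k p₂ q₂ k₂ : ℤ) (hp : p + p₂ = n + 1) (hq : q + q₂ = n + 1)
    (hk : k + k₂ = 2 * n - 1) (i : SchwIdx p q k) :
    dualIdx n p₂ q₂ k₂ p q k (by omega) (by omega) (by omega)
      (dualIdx n p q k p₂ q₂ k₂ hp hq hk i) = i := by
  apply Subtype.ext
  obtain ⟨⟨r, s⟩, hc⟩ := i
  simp only [dualIdx]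
  simp only [Prod.mk.injEq]; omega

end SchwAux

namespace SchwAux

variable {n : ℤ} {A : DoubleComplex}

/-- The duality map `L_{p₂,q₂}^{k₂} → (L_{p,q}^k)^∨`. -/
noncomputable def schwPhi (A : DoubleComplex)
    (e : ∀ r s : ℤ, A.X r s ≃ₗ[ℂ] Module.Dual ℂ (A.X (n - r) (n - s)))
    (p q k p₂ q₂ k₂ : ℤ) (hp : p + p₂ = n + 1) (hq : q + q₂ = n + 1)
    (hk : k + k₂ = 2 * n - 1) :
    SchwL A p₂ q₂ k₂ →ₗ[ℂ] Module.Dual ℂ (SchwL A p q k) :=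
  DirectSum.toModule ℂ _ _ fun i =>
    (DirectSum.component ℂ (SchwIdx p q k) (fun j => A.X j.1.1 j.1.2)
        (dualIdx n p₂ q₂ k₂ p q k (by omega) (by omega) (by omega) i)).dualMap
      ∘ₗ (e i.1.1 i.1.2).toLinearMap

/-- abbreviation for `lof` into a Schweitzer piece -/
noncomputable abbrev slof (A : DoubleComplex) (p q k : ℤ) (i : SchwIdx p q k) :
    A.X i.1.1 i.1.2 →ₗ[ℂ] SchwL A p q k :=
  DirectSum.lof ℂ (SchwIdx p q k) (fun j => A.X j.1.1 j.1.2) i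

variable (e : ∀ r s : ℤ, A.X r s ≃ₗ[ℂ] Module.Dual ℂ (A.X (n - r) (n - s)))
variable {p q k p₂ q₂ k₂ : ℤ}

lemma phi_lof_eq (hp : p + p₂ = n + 1) (hq : q + q₂ = n + 1) (hk : k + k₂ = 2 * n - 1)
    (a b : ℤ) (h₁ : schwCond p₂ q₂ k₂ (a, b)) (h₂ : schwCond p q k (n - a, n - b))
    (w : A.X a b) (x : A.X (n - a) (n - b)) :
    schwPhi A e p q k p₂ q₂ k₂ hp hq hk
        (slof A p₂ q₂ k₂ ⟨(a, b), h₁⟩ w)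
        (slof A p q k ⟨(n - a, n - b), h₂⟩ x)
      = e a b w x := by
  rw [schwPhi, DirectSum.toModule_lof]
  erw [LinearMap.comp_apply, LinearMap.dualMap_apply, LinearEquiv.coe_coe]
  congr 1
  exact DirectSum.component.lof_self (R := ℂ) (ι := SchwIdx p q k) _ _

lemma phi_lof_ne (hp : p + p₂ = n + 1) (hq : q + q₂ = n + 1) (hk : k + k₂ = 2 * n - 1)
    (a b : ℤ) (h₁ : schwCond p₂ q₂ k₂ (a, b)) (j : SchwIdx p q k)
    (hne : j.1 ≠ (n - a, n - b))
    (w : A.X a b) (x : A.X j.1.1 j.1.2) :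
    schwPhi A e p q k p₂ q₂ k₂ hp hq hk
        (slof A p₂ q₂ k₂ ⟨(a, b), h₁⟩ w)
        (slof A p q k j x)
      = 0 := by
  rw [schwPhi, DirectSum.toModule_lof]
  erw [LinearMap.comp_apply, LinearMap.dualMap_apply, LinearEquiv.coe_coe]
  have : (DirectSum.component ℂ (SchwIdx p q k) (fun j => A.X j.1.1 j.1.2)
      (dualIdx n p₂ q₂ k₂ p q k (by omega) (by omega) (by omega) ⟨(a, b), h₁⟩))
      ((slof A p q k j) x) = 0 := by
    have hne' : j ≠ dualIdx n p₂ q₂ k₂ p q k (by omega) (by omega) (by omega) ⟨(a, b), h₁⟩ := by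
      intro h; exact hne (by rw [h]; rfl)
    exact DFinsupp.single_eq_of_ne hne'.symm
  erw [this, map_zero]

end SchwAux

namespace SchwAux

variable {n : ℤ} {A : DoubleComplex}
variable (e : ∀ r s : ℤ, A.X r s ≃ₗ[ℂ] Module.Dual ℂ (A.X (n - r) (n - s)))
variable {p q k p₂ q₂ k₂ : ℤ}

lemma phi_apply (hp : p + p₂ = n + 1) (hq : q + q₂ = n + 1) (hk : k + k₂ = 2 * n - 1)
    (y : SchwL A p₂ q₂ k₂) (a b : ℤ) (h₁ : schwCond p₂ q₂ k₂ (a, b))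
    (h₂ : schwCond p q k (n - a, n - b)) (x : A.X (n - a) (n - b)) :
    schwPhi A e p q k p₂ q₂ k₂ hp hq hk y (slof A p q k ⟨(n - a, n - b), h₂⟩ x)
      = e a b (y ⟨(a, b), h₁⟩) x := by
  induction y using DirectSum.induction_on with
  | zero => simp
  | of i w =>
    have hof : (DirectSum.of (fun j : SchwIdx p₂ q₂ k₂ => A.X j.1.1 j.1.2) i w)
        = slof A p₂ q₂ k₂ i w :=
      (DirectSum.lof_eq_of ℂ (SchwIdx p₂ q₂ k₂) (fun j => A.X j.1.1 j.1.2) i w).symm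
    rw [hof]
    by_cases h : i = ⟨(a, b), h₁⟩
    · subst h
      rw [phi_lof_eq e hp hq hk a b h₁ h₂ w x]
      rw [DirectSum.lof_apply ℂ (M := fun j : SchwIdx p₂ q₂ k₂ => A.X j.1.1 j.1.2) ⟨(a, b), h₁⟩ w]
    · have hne : ((⟨(n - a, n - b), h₂⟩ : SchwIdx p q k)).1 ≠ (n - i.1.1, n - i.1.2) := by
        obtain ⟨⟨c, d⟩, hc⟩ := i
        simp only [ne_eq, Prod.mk.injEq, not_and]
        intro h1 h2
        exact absurd (by apply Subtype.ext; simp only [Prod.mk.injEq]; exact ⟨by omega, by omega⟩) h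
      rw [phi_lof_ne e hp hq hk i.1.1 i.1.2 i.2 ⟨(n - a, n - b), h₂⟩ hne w x]
      have : (DirectSum.lof ℂ _ (fun j : SchwIdx p₂ q₂ k₂ => A.X j.1.1 j.1.2) i w)
          ⟨(a, b), h₁⟩ = 0 := DFinsupp.single_eq_of_ne (Ne.symm h)
      rw [this, map_zero]
      rfl
  | add y y' hy hy' =>
    rw [map_add, LinearMap.add_apply, hy, hy', DirectSum.add_apply, map_add,
      LinearMap.add_apply]

lemma phi_injective (hp : p + p₂ = n + 1) (hq : q + q₂ = n + 1) (hk : k + k₂ = 2 * n - 1) :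
    Function.Injective (schwPhi A e p q k p₂ q₂ k₂ hp hq hk) := by
  rw [← LinearMap.ker_eq_bot, Submodule.eq_bot_iff]
  intro y hy
  rw [LinearMap.mem_ker] at hy
  refine DFinsupp.ext fun i => ?_
  obtain ⟨⟨a, b⟩, hc⟩ := i
  rw [DirectSum.zero_apply]
  apply (e a b).injective
  rw [map_zero]
  ext x
  have h₂ := (dualIdx n p₂ q₂ k₂ p q k (by omega) (by omega) (by omega) ⟨(a, b), hc⟩).2
  have := phi_apply e hp hq hk y a b hc h₂ x
  rw [hy] at this
  simp only [LinearMap.zero_apply] at this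
  rw [LinearMap.zero_apply, ← this]

lemma schwL_finite (hn : 0 ≤ n) (hfin : ∀ r s : ℤ, FiniteDimensional ℂ (A.X r s))
    (hconc : ∀ r s : ℤ, (r < 0 ∨ n < r ∨ s < 0 ∨ n < s) → Subsingleton (A.X r s))
    (p q k : ℤ) : FiniteDimensional ℂ (SchwL A p q k) := by
  classical
  set T : Finset (SchwIdx p q k) :=
    (Finset.Icc (0 : ℤ) n ×ˢ Finset.Icc (0 : ℤ) n).subtype (schwCond p q k) with hT
  let F : (⨁ i : {i : SchwIdx p q k // i ∈ T}, A.X i.1.1.1 i.1.1.2) →ₗ[ℂ] SchwL A p q k :=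
    DirectSum.toModule ℂ _ _ fun i => slof A p q k i.1
  haveI : FiniteDimensional ℂ (⨁ i : {i : SchwIdx p q k // i ∈ T}, A.X i.1.1.1 i.1.1.2) :=
    Module.Finite.equiv (DirectSum.linearEquivFunOnFintype ℂ _ _).symm
  apply Module.Finite.of_surjective F
  intro x
  induction x using DirectSum.induction_on with
  | zero => exact ⟨0, map_zero F⟩
  | of i w =>
    by_cases h : i ∈ T
    · refine ⟨DirectSum.lof ℂ _ _ ⟨i, h⟩ w, ?_⟩
      rw [DirectSum.toModule_lof, DirectSum.lof_eq_of ℂ]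
    · have : Subsingleton (A.X i.1.1 i.1.2) := by
        apply hconc
        simp only [hT, Finset.mem_subtype, Finset.mem_product, Finset.mem_Icc] at h
        have := i.2
        by_contra hcon
        push_neg at hcon
        exact h ⟨⟨by omega, by omega⟩, by omega, by omega⟩
      have : w = 0 := Subsingleton.elim w 0
      exact ⟨0, by rw [map_zero, this, map_zero]⟩
  | add x y hx hy =>
    obtain ⟨u, hu⟩ := hx; obtain ⟨v, hv⟩ := hy
    exact ⟨u + v, by rw [map_add, hu, hv]⟩

end SchwAux

namespace SchwAux

variable {n : ℤ} {A : DoubleComplex}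
variable (e : ∀ r s : ℤ, A.X r s ≃ₗ[ℂ] Module.Dual ℂ (A.X (n - r) (n - s)))
variable {p q k p₂ q₂ k₂ : ℤ}

lemma phi_bijective (hn : 0 ≤ n) (hfin : ∀ r s : ℤ, FiniteDimensional ℂ (A.X r s))
    (hconc : ∀ r s : ℤ, (r < 0 ∨ n < r ∨ s < 0 ∨ n < s) → Subsingleton (A.X r s))
    (hp : p + p₂ = n + 1) (hq : q + q₂ = n + 1) (hk : k + k₂ = 2 * n - 1) :
    Function.Bijective (schwPhi A e p q k p₂ q₂ k₂ hp hq hk) := by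
  haveI fd1 := schwL_finite hn hfin hconc (A := A) p q k
  haveI fd2 := schwL_finite hn hfin hconc (A := A) p₂ q₂ k₂
  have inj := phi_injective e hp hq hk
  have inj2 := phi_injective e (p := p₂) (q := q₂) (k := k₂) (p₂ := p) (q₂ := q) (k₂ := k)
    (by omega) (by omega) (by omega)
  have h1 : Module.finrank ℂ (SchwL A p₂ q₂ k₂) ≤ Module.finrank ℂ (SchwL A p q k) := by
    calc Module.finrank ℂ (SchwL A p₂ q₂ k₂)
        ≤ Module.finrank ℂ (Module.Dual ℂ (SchwL A p q k)) :=
          LinearMap.finrank_le_finrank_of_injective inj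
      _ = Module.finrank ℂ (SchwL A p q k) := Subspace.dual_finrank_eq
  have h2 : Module.finrank ℂ (SchwL A p q k) ≤ Module.finrank ℂ (SchwL A p₂ q₂ k₂) := by
    calc Module.finrank ℂ (SchwL A p q k)
        ≤ Module.finrank ℂ (Module.Dual ℂ (SchwL A p₂ q₂ k₂)) :=
          LinearMap.finrank_le_finrank_of_injective inj2
      _ = Module.finrank ℂ (SchwL A p₂ q₂ k₂) := Subspace.dual_finrank_eq
  have heq : Module.finrank ℂ (SchwL A p₂ q₂ k₂)
      = Module.finrank ℂ (Module.Dual ℂ (SchwL A p q k)) := by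
    rw [Subspace.dual_finrank_eq]; omega
  exact ⟨inj, (LinearMap.injective_iff_surjective_of_finrank_eq_finrank heq).mp inj⟩

lemma schwL_finrank_eq (e : ∀ r s : ℤ, A.X r s ≃ₗ[ℂ] Module.Dual ℂ (A.X (n - r) (n - s)))
    (hn : 0 ≤ n) (hfin : ∀ r s : ℤ, FiniteDimensional ℂ (A.X r s))
    (hconc : ∀ r s : ℤ, (r < 0 ∨ n < r ∨ s < 0 ∨ n < s) → Subsingleton (A.X r s))
    (hp : p + p₂ = n + 1) (hq : q + q₂ = n + 1) (hk : k + k₂ = 2 * n - 1) :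
    Module.finrank ℂ (SchwL A p₂ q₂ k₂) = Module.finrank ℂ (SchwL A p q k) := by
  haveI fd1 := schwL_finite hn hfin hconc (A := A) p q k
  have hb := phi_bijective e hn hfin hconc hp hq hk
  rw [(LinearEquiv.ofBijective _ hb).finrank_eq, Subspace.dual_finrank_eq]

end SchwAux

namespace SchwAux

variable {n : ℤ} {A : DoubleComplex}

lemma castX_d1' {r s r' s' : ℤ} (h1 : r = r') (h2 : s = s') (hr : r + 1 = r' + 1) (x : A.X r s) :
    A.d1 r' s' (A.castX h1 h2 x) = A.castX hr h2 (A.d1 r s x) := by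
  subst h1; subst h2; rfl

lemma castX_d2' {r s r' s' : ℤ} (h1 : r = r') (h2 : s = s') (hs : s + 1 = s' + 1) (x : A.X r s) :
    A.d2 r' s' (A.castX h1 h2 x) = A.castX h1 hs (A.d2 r s x) := by
  subst h1; subst h2; rfl

lemma castX_castX {r s r' s' r'' s'' : ℤ} (h1 : r = r') (h2 : s = s') (h3 : r' = r'')
    (h4 : s' = s'') (h5 : r = r'') (h6 : s = s'') (x : A.X r s) :
    A.castX h3 h4 (A.castX h1 h2 x) = A.castX h5 h6 x := by
  subst h1; subst h2; subst h3; subst h4; rfl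

lemma slof_congr (p q k : ℤ) {u v u' v' : ℤ} (hu : u = u') (hv : v = v')
    (h₁ : schwCond p q k (u, v)) (h₂ : schwCond p q k (u', v')) (w : A.X u v) :
    slof A p q k ⟨(u, v), h₁⟩ w = slof A p q k ⟨(u', v'), h₂⟩ (A.castX hu hv w) := by
  subst hu; subst hv; rfl

end SchwAux

namespace SchwAux

lemma natsub_aux (n r : ℤ) : n - (r + 1) + 1 = n - r := by omega

variable {n : ℤ} {A : DoubleComplex}

lemma phi_square
    (e : ∀ r s : ℤ, A.X r s ≃ₗ[ℂ] Module.Dual ℂ (A.X (n - r) (n - s)))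
    (he1 : ∀ (r s : ℤ) (x : A.X r s),
      e (r + 1) s (A.d1 r s x) =
        ((A.castX (natsub_aux n r) rfl).toLinearMap.comp
          (A.d1 (n - (r + 1)) (n - s))).dualMap (e r s x))
    (he2 : ∀ (r s : ℤ) (x : A.X r s),
      e r (s + 1) (A.d2 r s x) =
        ((A.castX rfl (natsub_aux n s)).toLinearMap.comp
          (A.d2 (n - r) (n - (s + 1)))).dualMap (e r s x))
    {p q k p₂ q₂ : ℤ} (hp : p + p₂ = n + 1) (hq : q + q₂ = n + 1)
    (m : ℤ) (hm : k + 1 + m = 2 * n - 1) :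
    (schwPhi A e p q k p₂ q₂ (m + 1) hp hq (by omega)) ∘ₗ schwD A p₂ q₂ m
      = (if k = p + q - 2 then (-1 : ℂ) else 1) •
        ((schwD A p q k).dualMap ∘ₗ schwPhi A e p q (k + 1) p₂ q₂ m hp hq (by omega)) := by
  apply DirectSum.linearMap_ext
  intro i
  obtain ⟨⟨a, b⟩, hi⟩ := i
  apply LinearMap.ext; intro z
  apply DirectSum.linearMap_ext
  intro j
  obtain ⟨⟨c, d⟩, hj⟩ := j
  apply LinearMap.ext; intro x
  have hi' := hi; have hj' := hj
  simp only [schwCond] at hi' hj'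
  simp only [LinearMap.comp_apply, LinearMap.smul_apply, LinearMap.dualMap_apply]
  by_cases hmid : m = p₂ + q₂ - 2
  · -- middle case
    have hk2 : k = p + q - 2 := by omega
    have ha : a = p₂ - 1 := by omega
    have hb : b = q₂ - 1 := by omega
    have hc : c = n - (a + 1) := by omega
    have hd : d = n - (b + 1) := by omega
    subst hc; subst hd
    rw [if_pos hk2]
    -- expand LHS differential
    rw [show (schwD A p₂ q₂ m) (slof A p₂ q₂ m ⟨(a, b), hi⟩ z)
        = slof A p₂ q₂ (m + 1) ⟨(a + 1, b + 1), by
            simp only [schwCond] at hi ⊢; omega⟩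
          (A.d1 a (b + 1) (A.d2 a b z)) from by
      rw [schwD, DirectSum.toModule_lof, dif_pos hmid]; rfl]
    -- expand RHS differential
    rw [show (schwD A p q k) (slof A p q k ⟨(n - (a + 1), n - (b + 1)), hj⟩ x)
        = slof A p q (k + 1) ⟨(n - (a + 1) + 1, n - (b + 1) + 1), by
            simp only [schwCond] at hj ⊢; omega⟩
          (A.d1 (n - (a + 1)) (n - (b + 1) + 1) (A.d2 (n - (a + 1)) (n - (b + 1)) x)) from by
      rw [schwD, DirectSum.toModule_lof, dif_pos hk2]; rfl]
    rw [slof_congr p q (k + 1) (show n - (a + 1) + 1 = n - a by omega)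
      (show n - (b + 1) + 1 = n - b by omega) _ (by simp only [schwCond] at hi ⊢; omega)]
    rw [phi_lof_eq e hp hq _ (a + 1) (b + 1) _ hj _ x]
    rw [phi_lof_eq e hp hq _ a b hi _ z _]
    -- now the pairing computation
    rw [he1 a (b + 1) (A.d2 a b z)]
    simp only [LinearMap.dualMap_apply, LinearMap.comp_apply, LinearEquiv.coe_coe]
    rw [he2 a b z]
    simp only [LinearMap.dualMap_apply, LinearMap.comp_apply, LinearEquiv.coe_coe]
    rw [castX_d2' (show n - (a + 1) + 1 = n - a by omega) rfl
      (show n - (b + 1) + 1 = n - (b + 1) + 1 by omega) (A.d1 (n - (a + 1)) (n - (b + 1)) x)]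
    rw [castX_castX (A := A) _ _ _ _ (show n - (a + 1) + 1 = n - a by omega)
      (show n - (b + 1) + 1 = n - b by omega)]
    have hanti : A.d2 (n - (a + 1) + 1) (n - (b + 1)) (A.d1 (n - (a + 1)) (n - (b + 1)) x)
        = - A.d1 (n - (a + 1)) (n - (b + 1) + 1) (A.d2 (n - (a + 1)) (n - (b + 1)) x) := by
      exact eq_neg_of_add_eq_zero_right (A.anticomm (n - (a + 1)) (n - (b + 1)) x)
    rw [hanti, map_neg, map_neg, neg_smul, one_smul]
  · -- non-middle case
    have hk2 : ¬ k = p + q - 2 := by omega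
    rw [if_neg hk2, one_smul]
    rw [show (schwD A p₂ q₂ m) (slof A p₂ q₂ m ⟨(a, b), hi⟩ z)
        = (if h : schwCond p₂ q₂ (m + 1) (a + 1, b) then
            slof A p₂ q₂ (m + 1) ⟨(a + 1, b), h⟩ (A.d1 a b z) else 0)
          + (if h : schwCond p₂ q₂ (m + 1) (a, b + 1) then
            slof A p₂ q₂ (m + 1) ⟨(a, b + 1), h⟩ (A.d2 a b z) else 0) from by
      rw [schwD, DirectSum.toModule_lof, dif_neg hmid, LinearMap.add_apply]
      split_ifs <;> rfl]
    rw [show (schwD A p q k) (slof A p q k ⟨(c, d), hj⟩ x)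
        = (if h : schwCond p q (k + 1) (c + 1, d) then
            slof A p q (k + 1) ⟨(c + 1, d), h⟩ (A.d1 c d x) else 0)
          + (if h : schwCond p q (k + 1) (c, d + 1) then
            slof A p q (k + 1) ⟨(c, d + 1), h⟩ (A.d2 c d x) else 0) from by
      rw [schwD, DirectSum.toModule_lof, dif_neg hk2, LinearMap.add_apply]
      split_ifs <;> rfl]
    rw [map_add, LinearMap.add_apply, map_add]
    by_cases hcd1 : c = n - (a + 1) ∧ d = n - b
    · obtain ⟨hc, hd⟩ := hcd1
      subst hc; subst hd
      have hC1 : schwCond p₂ q₂ (m + 1) (a + 1, b) := by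
        simp only [schwCond] at hj ⊢; omega
      have cc1 : schwCond p q (k + 1) (n - (a + 1) + 1, n - b) := by
        simp only [schwCond] at hi ⊢; omega
      rw [dif_pos hC1, dif_pos cc1]
      rw [phi_lof_eq e hp hq _ (a + 1) b hC1 hj (A.d1 a b z) x]
      rw [slof_congr p q (k + 1) (show n - (a + 1) + 1 = n - a by omega)
        (show n - b = n - b from rfl) _ (by simp only [schwCond] at hi ⊢; omega)]
      rw [phi_lof_eq e hp hq _ a b hi _ z _]
      have hz1 : (if h : schwCond p₂ q₂ (m + 1) (a, b + 1) then
            slof A p₂ q₂ (m + 1) ⟨(a, b + 1), h⟩ (A.d2 a b z) else 0) = 0 ∨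
          (∃ h, (if h' : schwCond p₂ q₂ (m + 1) (a, b + 1) then
            slof A p₂ q₂ (m + 1) ⟨(a, b + 1), h'⟩ (A.d2 a b z) else 0)
            = slof A p₂ q₂ (m + 1) ⟨(a, b + 1), h⟩ (A.d2 a b z)) := by
        by_cases h : schwCond p₂ q₂ (m + 1) (a, b + 1)
        · exact Or.inr ⟨h, dif_pos h⟩
        · exact Or.inl (dif_neg h)
      have hterm2 : (schwPhi A e p q k p₂ q₂ (m + 1) hp hq (by omega))
          (if h : schwCond p₂ q₂ (m + 1) (a, b + 1) then
            slof A p₂ q₂ (m + 1) ⟨(a, b + 1), h⟩ (A.d2 a b z) else 0)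
          (slof A p q k ⟨(n - (a + 1), n - b), hj⟩ x) = 0 := by
        rcases hz1 with h0 | ⟨h, heq⟩
        · rw [h0, map_zero]; rfl
        · rw [heq, phi_lof_ne e hp hq _ a (b + 1) h ⟨(n - (a + 1), n - b), hj⟩
            (by simp only [ne_eq, Prod.mk.injEq, not_and]; intro h1 h2; omega) (A.d2 a b z) x]
      rw [hterm2]
      have hterm2' : (schwPhi A e p q (k + 1) p₂ q₂ m hp hq (by omega))
          (slof A p₂ q₂ m ⟨(a, b), hi⟩ z)
          (if h : schwCond p q (k + 1) (n - (a + 1), n - b + 1) then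
            slof A p q (k + 1) ⟨(n - (a + 1), n - b + 1), h⟩ (A.d2 (n - (a + 1)) (n - b) x)
          else 0) = 0 := by
        by_cases h : schwCond p q (k + 1) (n - (a + 1), n - b + 1)
        · rw [dif_pos h, phi_lof_ne e hp hq _ a b hi ⟨(n - (a + 1), n - b + 1), h⟩
            (by simp only [ne_eq, Prod.mk.injEq, not_and]; intro h1 h2; omega)
            z (A.d2 (n - (a + 1)) (n - b) x)]
        · rw [dif_neg h, map_zero]
      rw [hterm2']
      rw [he1 a b z]
      simp only [LinearMap.dualMap_apply, LinearMap.comp_apply, LinearEquiv.coe_coe,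
        add_zero]
    · by_cases hcd2 : c = n - a ∧ d = n - (b + 1)
      · obtain ⟨hc, hd⟩ := hcd2
        subst hc; subst hd
        have hC2 : schwCond p₂ q₂ (m + 1) (a, b + 1) := by
          simp only [schwCond] at hj ⊢; omega
        have cc2 : schwCond p q (k + 1) (n - a, n - (b + 1) + 1) := by
          simp only [schwCond] at hi ⊢; omega
        rw [dif_pos hC2, dif_pos cc2]
        rw [phi_lof_eq e hp hq _ a (b + 1) hC2 hj (A.d2 a b z) x]
        rw [slof_congr p q (k + 1) (show n - a = n - a from rfl)
          (show n - (b + 1) + 1 = n - b by omega) _ (by simp only [schwCond] at hi ⊢; omega)]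
        rw [phi_lof_eq e hp hq _ a b hi _ z _]
        have hterm1 : (schwPhi A e p q k p₂ q₂ (m + 1) hp hq (by omega))
            (if h : schwCond p₂ q₂ (m + 1) (a + 1, b) then
              slof A p₂ q₂ (m + 1) ⟨(a + 1, b), h⟩ (A.d1 a b z) else 0)
            (slof A p q k ⟨(n - a, n - (b + 1)), hj⟩ x) = 0 := by
          by_cases h : schwCond p₂ q₂ (m + 1) (a + 1, b)
          · rw [dif_pos h, phi_lof_ne e hp hq _ (a + 1) b h ⟨(n - a, n - (b + 1)), hj⟩
              (by simp only [ne_eq, Prod.mk.injEq, not_and]; intro h1 h2; omega)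
              (A.d1 a b z) x]
          · rw [dif_neg h, map_zero]; rfl
        rw [hterm1]
        have hterm1' : (schwPhi A e p q (k + 1) p₂ q₂ m hp hq (by omega))
            (slof A p₂ q₂ m ⟨(a, b), hi⟩ z)
            (if h : schwCond p q (k + 1) (n - a + 1, n - (b + 1)) then
              slof A p q (k + 1) ⟨(n - a + 1, n - (b + 1)), h⟩ (A.d1 (n - a) (n - (b + 1)) x)
            else 0) = 0 := by
          by_cases h : schwCond p q (k + 1) (n - a + 1, n - (b + 1))
          · rw [dif_pos h, phi_lof_ne e hp hq _ a b hi ⟨(n - a + 1, n - (b + 1)), h⟩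
              (by simp only [ne_eq, Prod.mk.injEq, not_and]; intro h1 h2; omega)
              z (A.d1 (n - a) (n - (b + 1)) x)]
          · rw [dif_neg h, map_zero]
        rw [hterm1']
        rw [he2 a b z]
        simp only [LinearMap.dualMap_apply, LinearMap.comp_apply, LinearEquiv.coe_coe,
          zero_add]
      · -- neither: everything vanishes
        have hA : (schwPhi A e p q k p₂ q₂ (m + 1) hp hq (by omega))
            (if h : schwCond p₂ q₂ (m + 1) (a + 1, b) then
              slof A p₂ q₂ (m + 1) ⟨(a + 1, b), h⟩ (A.d1 a b z) else 0)
            (slof A p q k ⟨(c, d), hj⟩ x) = 0 := by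
          by_cases h : schwCond p₂ q₂ (m + 1) (a + 1, b)
          · rw [dif_pos h, phi_lof_ne e hp hq _ (a + 1) b h ⟨(c, d), hj⟩
              (by simp only [ne_eq, Prod.mk.injEq, not_and]; intro h1 h2
                  exact hcd1 ⟨by omega, by omega⟩) (A.d1 a b z) x]
          · rw [dif_neg h, map_zero]; rfl
        have hB : (schwPhi A e p q k p₂ q₂ (m + 1) hp hq (by omega))
            (if h : schwCond p₂ q₂ (m + 1) (a, b + 1) then
              slof A p₂ q₂ (m + 1) ⟨(a, b + 1), h⟩ (A.d2 a b z) else 0)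
            (slof A p q k ⟨(c, d), hj⟩ x) = 0 := by
          by_cases h : schwCond p₂ q₂ (m + 1) (a, b + 1)
          · rw [dif_pos h, phi_lof_ne e hp hq _ a (b + 1) h ⟨(c, d), hj⟩
              (by simp only [ne_eq, Prod.mk.injEq, not_and]; intro h1 h2
                  exact hcd2 ⟨by omega, by omega⟩) (A.d2 a b z) x]
          · rw [dif_neg h, map_zero]; rfl
        have hA' : (schwPhi A e p q (k + 1) p₂ q₂ m hp hq (by omega))
            (slof A p₂ q₂ m ⟨(a, b), hi⟩ z)
            (if h : schwCond p q (k + 1) (c + 1, d) then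
              slof A p q (k + 1) ⟨(c + 1, d), h⟩ (A.d1 c d x) else 0) = 0 := by
          by_cases h : schwCond p q (k + 1) (c + 1, d)
          · rw [dif_pos h, phi_lof_ne e hp hq _ a b hi ⟨(c + 1, d), h⟩
              (by simp only [ne_eq, Prod.mk.injEq, not_and]; intro h1 h2
                  exact hcd1 ⟨by omega, by omega⟩) z (A.d1 c d x)]
          · rw [dif_neg h, map_zero]
        have hB' : (schwPhi A e p q (k + 1) p₂ q₂ m hp hq (by omega))
            (slof A p₂ q₂ m ⟨(a, b), hi⟩ z)
            (if h : schwCond p q (k + 1) (c, d + 1) then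
              slof A p q (k + 1) ⟨(c, d + 1), h⟩ (A.d2 c d x) else 0) = 0 := by
          by_cases h : schwCond p q (k + 1) (c, d + 1)
          · rw [dif_pos h, phi_lof_ne e hp hq _ a b hi ⟨(c, d + 1), h⟩
              (by simp only [ne_eq, Prod.mk.injEq, not_and]; intro h1 h2
                  exact hcd2 ⟨by omega, by omega⟩) z (A.d2 c d x)]
          · rw [dif_neg h, map_zero]
        rw [hA, hB, hA', hB', add_zero]

end SchwAux

namespace SchwAux

variable {n : ℤ} {A : DoubleComplex}

lemma phi_cast (e : ∀ r s : ℤ, A.X r s ≃ₗ[ℂ] Module.Dual ℂ (A.X (n - r) (n - s)))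
    {p q k p₂ q₂ k₂ m : ℤ} (hp : p + p₂ = n + 1) (hq : q + q₂ = n + 1)
    (hk : k + k₂ = 2 * n - 1) (hm : m = k₂) (hk' : k + m = 2 * n - 1) :
    (schwPhi A e p q k p₂ q₂ k₂ hp hq hk) ∘ₗ (schwLCast A p₂ q₂ hm).toLinearMap
      = schwPhi A e p q k p₂ q₂ m hp hq hk' := by
  subst hm; rfl

/-- generic: composing with an injective map preserves rank -/
lemma rank_comp_inj {V W W' : Type} [AddCommGroup V] [Module ℂ V] [AddCommGroup W]
    [Module ℂ W] [AddCommGroup W'] [Module ℂ W'] (f : V →ₗ[ℂ] W) (g : W →ₗ[ℂ] W')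
    (hg : Function.Injective g) :
    Module.finrank ℂ (LinearMap.range (g ∘ₗ f)) = Module.finrank ℂ (LinearMap.range f) := by
  rw [LinearMap.range_comp]
  exact (Submodule.equivMapOfInjective g hg _).finrank_eq.symm

lemma rank_comp_surj {V W W' : Type} [AddCommGroup V] [Module ℂ V] [AddCommGroup W]
    [Module ℂ W] [AddCommGroup W'] [Module ℂ W'] (f : V →ₗ[ℂ] W) (g : W →ₗ[ℂ] W')
    (hf : Function.Surjective f) :
    Module.finrank ℂ (LinearMap.range (g ∘ₗ f)) = Module.finrank ℂ (LinearMap.range g) := by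
  rw [LinearMap.range_comp_of_range_eq_top g (LinearMap.range_eq_top.mpr hf)]

lemma rank_smul {V W : Type} [AddCommGroup V] [Module ℂ V] [AddCommGroup W] [Module ℂ W]
    (f : V →ₗ[ℂ] W) (c : ℂ) (hc : c ≠ 0) :
    Module.finrank ℂ (LinearMap.range (c • f)) = Module.finrank ℂ (LinearMap.range f) := by
  rw [LinearMap.range_smul f c hc]

lemma eps_ne (p q k : ℤ) : (if k = p + q - 2 then (-1 : ℂ) else 1) ≠ 0 := by
  split_ifs <;> norm_num

/-- the square in `schwDFrom` form -/
lemma phi_square' (e : ∀ r s : ℤ, A.X r s ≃ₗ[ℂ] Module.Dual ℂ (A.X (n - r) (n - s)))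
    (he1 : ∀ (r s : ℤ) (x : A.X r s),
      e (r + 1) s (A.d1 r s x) =
        ((A.castX (natsub_aux n r) rfl).toLinearMap.comp
          (A.d1 (n - (r + 1)) (n - s))).dualMap (e r s x))
    (he2 : ∀ (r s : ℤ) (x : A.X r s),
      e r (s + 1) (A.d2 r s x) =
        ((A.castX rfl (natsub_aux n s)).toLinearMap.comp
          (A.d2 (n - r) (n - (s + 1)))).dualMap (e r s x))
    {p q k p₂ q₂ k₂ : ℤ} (hp : p + p₂ = n + 1) (hq : q + q₂ = n + 1)
    (hk : k + k₂ = 2 * n - 1) :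
    (schwPhi A e p q k p₂ q₂ k₂ hp hq hk) ∘ₗ schwDFrom A p₂ q₂ k₂
      = (if k = p + q - 2 then (-1 : ℂ) else 1) •
        ((schwD A p q k).dualMap ∘ₗ
          schwPhi A e p q (k + 1) p₂ q₂ (k₂ - 1) hp hq
            (show k + 1 + (k₂ - 1) = 2 * n - 1 by omega)) := by
  have h1 := phi_square e he1 he2 (k := k) hp hq (k₂ - 1) (show k + 1 + (k₂ - 1) = 2 * n - 1 by omega)
  rw [schwDFrom, ← LinearMap.comp_assoc,
    phi_cast e hp hq hk (show k₂ - 1 + 1 = k₂ by omega) (by omega)]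
  exact h1

end SchwAux

namespace SchwAux

variable {n : ℤ} {A : DoubleComplex}

/-- rank of `schwDFrom` equals rank of the underlying `schwD`. -/
lemma rank_from (p q k : ℤ) :
    Module.finrank ℂ (LinearMap.range (schwDFrom A p q k))
      = Module.finrank ℂ (LinearMap.range (schwD A p q (k - 1))) :=
  rank_comp_inj _ _ (schwLCast A p q (show k - 1 + 1 = k by omega)).injective

lemma rank_schwD_congr (p q : ℤ) {k k' : ℤ} (h : k = k') :
    Module.finrank ℂ (LinearMap.range (schwD A p q k))
      = Module.finrank ℂ (LinearMap.range (schwD A p q k')) := by subst h; rfl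

lemma schwD_cast (p q : ℤ) {a a' : ℤ} (h : a = a') (h' : a + 1 = a' + 1) :
    schwD A p q a' ∘ₗ (schwLCast A p q h).toLinearMap
      = (schwLCast A p q h').toLinearMap ∘ₗ schwD A p q a := by
  subst h; rfl

section ranks

variable (e : ∀ r s : ℤ, A.X r s ≃ₗ[ℂ] Module.Dual ℂ (A.X (n - r) (n - s)))
    (he1 : ∀ (r s : ℤ) (x : A.X r s),
      e (r + 1) s (A.d1 r s x) =
        ((A.castX (natsub_aux n r) rfl).toLinearMap.comp
          (A.d1 (n - (r + 1)) (n - s))).dualMap (e r s x))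
    (he2 : ∀ (r s : ℤ) (x : A.X r s),
      e r (s + 1) (A.d2 r s x) =
        ((A.castX rfl (natsub_aux n s)).toLinearMap.comp
          (A.d2 (n - r) (n - (s + 1)))).dualMap (e r s x))
    (hn : 0 ≤ n) (hfin : ∀ r s : ℤ, FiniteDimensional ℂ (A.X r s))
    (hconc : ∀ r s : ℤ, (r < 0 ∨ n < r ∨ s < 0 ∨ n < s) → Subsingleton (A.X r s))

include e he1 he2 hn hfin hconc in
lemma rank_from_eq {p q k p₂ q₂ k₂ : ℤ} (hp : p + p₂ = n + 1) (hq : q + q₂ = n + 1)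
    (hk : k + k₂ = 2 * n - 1) :
    Module.finrank ℂ (LinearMap.range (schwDFrom A p₂ q₂ k₂))
      = Module.finrank ℂ (LinearMap.range (schwD A p q k)) := by
  haveI := schwL_finite hn hfin hconc (A := A) p₂ q₂ k₂
  haveI := schwL_finite hn hfin hconc (A := A) p₂ q₂ (k₂ - 1)
  haveI := schwL_finite hn hfin hconc (A := A) p q k
  haveI := schwL_finite hn hfin hconc (A := A) p q (k + 1)
  have hΦ := phi_bijective e hn hfin hconc hp hq hk
  have hΦ' := phi_bijective e hn hfin hconc hp hq
    (show k + 1 + (k₂ - 1) = 2 * n - 1 by omega)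
  calc Module.finrank ℂ (LinearMap.range (schwDFrom A p₂ q₂ k₂))
      = Module.finrank ℂ (LinearMap.range
          ((schwPhi A e p q k p₂ q₂ k₂ hp hq hk) ∘ₗ schwDFrom A p₂ q₂ k₂)) :=
        (rank_comp_inj _ _ hΦ.1).symm
    _ = Module.finrank ℂ (LinearMap.range ((if k = p + q - 2 then (-1 : ℂ) else 1) •
          ((schwD A p q k).dualMap ∘ₗ schwPhi A e p q (k + 1) p₂ q₂ (k₂ - 1) hp hq
            (show k + 1 + (k₂ - 1) = 2 * n - 1 by omega)))) := by
        rw [phi_square' e he1 he2 hp hq hk]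
    _ = Module.finrank ℂ (LinearMap.range
          ((schwD A p q k).dualMap ∘ₗ schwPhi A e p q (k + 1) p₂ q₂ (k₂ - 1) hp hq
            (show k + 1 + (k₂ - 1) = 2 * n - 1 by omega))) :=
        rank_smul _ _ (eps_ne p q k)
    _ = Module.finrank ℂ (LinearMap.range (schwD A p q k).dualMap) :=
        rank_comp_surj _ _ hΦ'.2
    _ = Module.finrank ℂ (LinearMap.range (schwD A p q k)) :=
        LinearMap.finrank_range_dualMap_eq_finrank_range _

include e he1 he2 hn hfin hconc in
lemma rank_dcomp_eq {p q k p₂ q₂ k₂ : ℤ} (hp : p + p₂ = n + 1) (hq : q + q₂ = n + 1)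
    (hk : k + k₂ = 2 * n - 1) :
    Module.finrank ℂ (LinearMap.range ((schwD A p₂ q₂ k₂) ∘ₗ (schwDFrom A p₂ q₂ k₂)))
      = Module.finrank ℂ (LinearMap.range ((schwD A p q k) ∘ₗ (schwDFrom A p q k))) := by
  haveI := schwL_finite hn hfin hconc (A := A) p₂ q₂ (k₂ - 1)
  haveI := schwL_finite hn hfin hconc (A := A) p q (k - 1)
  haveI := schwL_finite hn hfin hconc (A := A) p q ((k - 1) + 1 + 1)
  have hΦ := phi_bijective e hn hfin hconc (p := p) (q := q) (k := k - 1)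
    (p₂ := p₂) (q₂ := q₂) (k₂ := k₂ + 1) hp hq (by omega)
  have hΦ' := phi_bijective e hn hfin hconc (p := p) (q := q) (k := k - 1 + 1 + 1)
    (p₂ := p₂) (q₂ := q₂) (k₂ := k₂ - 1) hp hq (by omega)
  -- square for d₂ (k₂) :
  have hsq1 := phi_square e he1 he2 (k := k - 1) (p₂ := p₂) (q₂ := q₂) hp hq k₂
    (show k - 1 + 1 + k₂ = 2 * n - 1 by omega)
  -- square (From form) for From₂ k₂ :
  have hsq2 := phi_square' e he1 he2 (k := k - 1 + 1) (p₂ := p₂) (q₂ := q₂) (k₂ := k₂)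
    hp hq (show k - 1 + 1 + k₂ = 2 * n - 1 by omega)
  set ε₁ : ℂ := if k - 1 = p + q - 2 then (-1 : ℂ) else 1 with hε₁
  set ε₂ : ℂ := if k - 1 + 1 = p + q - 2 then (-1 : ℂ) else 1 with hε₂
  set Φ₁ := schwPhi A e p q (k - 1) p₂ q₂ (k₂ + 1) hp hq (by omega) with hΦ₁def
  have key : Φ₁ ∘ₗ ((schwD A p₂ q₂ k₂) ∘ₗ (schwDFrom A p₂ q₂ k₂))
      = (ε₁ * ε₂) • (((schwD A p q (k - 1 + 1)) ∘ₗ (schwD A p q (k - 1))).dualMap ∘ₗ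
          schwPhi A e p q (k - 1 + 1 + 1) p₂ q₂ (k₂ - 1) hp hq (by omega)) := by
    rw [← LinearMap.comp_assoc, hsq1, LinearMap.smul_comp, LinearMap.comp_assoc, hsq2,
      LinearMap.comp_smul, @smul_smul ℂ (SchwL A p₂ q₂ (k₂ - 1) →ₗ[ℂ] Dual ℂ (SchwL A p q (k - 1))) _ Module.toDistribMulAction.toMulAction, ← LinearMap.comp_assoc,
      LinearMap.dualMap_comp_dualMap]
  have h1 : Module.finrank ℂ (LinearMap.range ((schwD A p₂ q₂ k₂) ∘ₗ (schwDFrom A p₂ q₂ k₂)))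
      = Module.finrank ℂ (LinearMap.range
        ((schwD A p q (k - 1 + 1)) ∘ₗ (schwD A p q (k - 1)))) := by
    calc Module.finrank ℂ (LinearMap.range ((schwD A p₂ q₂ k₂) ∘ₗ (schwDFrom A p₂ q₂ k₂)))
        = Module.finrank ℂ (LinearMap.range (Φ₁ ∘ₗ ((schwD A p₂ q₂ k₂) ∘ₗ
            (schwDFrom A p₂ q₂ k₂)))) := (rank_comp_inj _ _ hΦ.1).symm
      _ = Module.finrank ℂ (LinearMap.range ((ε₁ * ε₂) •
            (((schwD A p q (k - 1 + 1)) ∘ₗ (schwD A p q (k - 1))).dualMap ∘ₗ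
            schwPhi A e p q (k - 1 + 1 + 1) p₂ q₂ (k₂ - 1) hp hq (by omega)))) := by
          rw [key]
      _ = Module.finrank ℂ (LinearMap.range
            (((schwD A p q (k - 1 + 1)) ∘ₗ (schwD A p q (k - 1))).dualMap ∘ₗ
            schwPhi A e p q (k - 1 + 1 + 1) p₂ q₂ (k₂ - 1) hp hq (by omega))) := by
          apply rank_smul
          simp only [hε₁, hε₂]
          split_ifs <;> norm_num
      _ = Module.finrank ℂ (LinearMap.range
            (((schwD A p q (k - 1 + 1)) ∘ₗ (schwD A p q (k - 1))).dualMap)) :=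
          rank_comp_surj _ _ hΦ'.2
      _ = Module.finrank ℂ (LinearMap.range
            ((schwD A p q (k - 1 + 1)) ∘ₗ (schwD A p q (k - 1)))) :=
          LinearMap.finrank_range_dualMap_eq_finrank_range _
  rw [h1]
  -- finally relate to `schwD ∘ schwDFrom` via a cast
  have h3 : (schwD A p q k) ∘ₗ (schwDFrom A p q k)
      = (schwLCast A p q (show k - 1 + 1 + 1 = k + 1 by omega)).toLinearMap ∘ₗ
        ((schwD A p q (k - 1 + 1)) ∘ₗ (schwD A p q (k - 1))) := by
    rw [schwDFrom, ← LinearMap.comp_assoc,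
      schwD_cast (A := A) p q (show k - 1 + 1 = k by omega)
        (show k - 1 + 1 + 1 = k + 1 by omega),
      LinearMap.comp_assoc]
  rw [h3, rank_comp_inj _ _ (schwLCast A p q
    (show k - 1 + 1 + 1 = k + 1 by omega)).injective]

end ranks

end SchwAux

namespace SchwAux

open Module Submodule LinearMap

lemma finrank_comap_subtype {V₂ : Type} [AddCommGroup V₂] [Module ℂ V₂]
    [FiniteDimensional ℂ V₂] (p p' : Submodule ℂ V₂) :
    finrank ℂ (Submodule.comap p.subtype p') = finrank ℂ (p ⊓ p' : Submodule ℂ V₂) := by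
  rw [← Submodule.map_comap_subtype p p', Submodule.finrank_map_subtype_eq]

lemma coh_formula {V₁ V₂ V₃ : Type} [AddCommGroup V₁] [Module ℂ V₁] [AddCommGroup V₂]
    [Module ℂ V₂] [AddCommGroup V₃] [Module ℂ V₃] [FiniteDimensional ℂ V₂]
    (f : V₁ →ₗ[ℂ] V₂) (g : V₂ →ₗ[ℂ] V₃) :
    finrank ℂ (LinearMap.ker g ⧸
        Submodule.comap (LinearMap.ker g).subtype (LinearMap.range f))
      + finrank ℂ (LinearMap.range f) + finrank ℂ (LinearMap.range g)
    = finrank ℂ V₂ + finrank ℂ (LinearMap.range (g ∘ₗ f)) := by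
  have h1 := Submodule.finrank_quotient_add_finrank
    (Submodule.comap (LinearMap.ker g).subtype (LinearMap.range f))
  have h2 := finrank_comap_subtype (LinearMap.ker g) (LinearMap.range f)
  have hcomm : ((LinearMap.ker g) ⊓ (LinearMap.range f) : Submodule ℂ V₂)
      = (LinearMap.range f) ⊓ (LinearMap.ker g) := inf_comm _ _
  rw [hcomm] at h2
  have h3 : finrank ℂ (LinearMap.range (g ∘ₗ f))
      + finrank ℂ ((LinearMap.range f) ⊓ (LinearMap.ker g) : Submodule ℂ V₂)
      = finrank ℂ (LinearMap.range f) := by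
    have hrn := LinearMap.finrank_range_add_finrank_ker (g ∘ₗ (LinearMap.range f).subtype)
    have hker : finrank ℂ (LinearMap.ker (g ∘ₗ (LinearMap.range f).subtype))
        = finrank ℂ ((LinearMap.range f) ⊓ (LinearMap.ker g) : Submodule ℂ V₂) := by
      rw [LinearMap.ker_comp, finrank_comap_subtype (LinearMap.range f) (LinearMap.ker g)]
    have hrg : LinearMap.range (g ∘ₗ (LinearMap.range f).subtype)
        = LinearMap.range (g ∘ₗ f) := by
      rw [LinearMap.range_comp, LinearMap.range_comp, Submodule.range_subtype]
    rw [hrg, hker] at hrn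
    exact hrn
  have h4 := LinearMap.finrank_range_add_finrank_ker g
  omega

end SchwAux

/-- Serre duality for Schweitzer cohomology (abstract form). Let `A` be a double
complex with finite-dimensional components concentrated in bidegrees `0 ≤ r,s ≤ n`
which is isomorphic to its dual double complex `DA` (a bidegree-preserving linear
isomorphism commuting with the differentials, where `(DA)^{r,s} = (A^{n-r,n-s})^∨`
with transposed differentials). Then
`H^k(L_{p,q}(A)) ≅ (H^{2n-k-1}(L_{n-p+1,n-q+1}(A)))^∨`; equivalently, there is a
perfect pairing `H^k(L_{p,q}(A)) × H^{2n-k-1}(L_{n-p+1,n-q+1}(A)) → ℂ`. -/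
theorem schw_serre_duality (n : ℤ) (hn : 0 ≤ n) (A : DoubleComplex)
    (hfin : ∀ r s : ℤ, FiniteDimensional ℂ (A.X r s))
    (hconc : ∀ r s : ℤ, (r < 0 ∨ n < r ∨ s < 0 ∨ n < s) → Subsingleton (A.X r s))
    (e : ∀ r s : ℤ, A.X r s ≃ₗ[ℂ] Module.Dual ℂ (A.X (n - r) (n - s)))
    (he1 : ∀ (r s : ℤ) (x : A.X r s),
      e (r + 1) s (A.d1 r s x) =
        ((A.castX (show n - (r + 1) + 1 = n - r by omega) rfl).toLinearMap.comp
          (A.d1 (n - (r + 1)) (n - s))).dualMap (e r s x))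
    (he2 : ∀ (r s : ℤ) (x : A.X r s),
      e r (s + 1) (A.d2 r s x) =
        ((A.castX rfl (show n - (s + 1) + 1 = n - s by omega)).toLinearMap.comp
          (A.d2 (n - r) (n - (s + 1)))).dualMap (e r s x))
    (p q k : ℤ) :
    Nonempty (SchwCoh A p q k ≃ₗ[ℂ]
        Module.Dual ℂ (SchwCoh A (n - p + 1) (n - q + 1) (2 * n - k - 1))) ∧
    ∃ P : SchwCoh A p q k →ₗ[ℂ]
        SchwCoh A (n - p + 1) (n - q + 1) (2 * n - k - 1) →ₗ[ℂ] ℂ,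
      (∀ x : SchwCoh A p q k, x ≠ 0 → ∃ y, P x y ≠ 0) ∧
      (∀ y : SchwCoh A (n - p + 1) (n - q + 1) (2 * n - k - 1), y ≠ 0 →
        ∃ x, P x y ≠ 0) := by
  classical
  haveI := hfin
  have hp : p + (n - p + 1) = n + 1 := by omega
  have hq : q + (n - q + 1) = n + 1 := by omega
  have hk : k + (2 * n - k - 1) = 2 * n - 1 := by omega
  haveI fd1 := SchwAux.schwL_finite hn hfin hconc (A := A) p q k
  haveI fd2 := SchwAux.schwL_finite hn hfin hconc (A := A) (n - p + 1) (n - q + 1)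
    (2 * n - k - 1)
  -- the two Euler-type identities
  have E₁ := SchwAux.coh_formula (schwDFrom A p q k) (schwD A p q k)
  have E₂ := SchwAux.coh_formula (schwDFrom A (n - p + 1) (n - q + 1) (2 * n - k - 1))
    (schwD A (n - p + 1) (n - q + 1) (2 * n - k - 1))
  have E₁' : Module.finrank ℂ (SchwCoh A p q k)
      + Module.finrank ℂ (LinearMap.range (schwDFrom A p q k))
      + Module.finrank ℂ (LinearMap.range (schwD A p q k))
      = Module.finrank ℂ (SchwL A p q k)
      + Module.finrank ℂ (LinearMap.range (schwD A p q k ∘ₗ schwDFrom A p q k)) := E₁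
  have E₂' : Module.finrank ℂ (SchwCoh A (n - p + 1) (n - q + 1) (2 * n - k - 1))
      + Module.finrank ℂ (LinearMap.range
          (schwDFrom A (n - p + 1) (n - q + 1) (2 * n - k - 1)))
      + Module.finrank ℂ (LinearMap.range
          (schwD A (n - p + 1) (n - q + 1) (2 * n - k - 1)))
      = Module.finrank ℂ (SchwL A (n - p + 1) (n - q + 1) (2 * n - k - 1))
      + Module.finrank ℂ (LinearMap.range
          (schwD A (n - p + 1) (n - q + 1) (2 * n - k - 1) ∘ₗ
            schwDFrom A (n - p + 1) (n - q + 1) (2 * n - k - 1))) := E₂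
  clear E₁ E₂
  -- rank equalities via the duality
  have R1 := SchwAux.rank_from_eq e he1 he2 hn hfin hconc hp hq hk
  have R2 := SchwAux.rank_from_eq e he1 he2 hn hfin hconc
    (p := n - p + 1) (q := n - q + 1) (k := 2 * n - k - 1)
    (p₂ := p) (q₂ := q) (k₂ := k) (by omega) (by omega) (by omega)
  have R3 := SchwAux.rank_dcomp_eq e he1 he2 hn hfin hconc hp hq hk
  have R4 := SchwAux.schwL_finrank_eq e hn hfin hconc hp hq hk
  -- conclusion on dimensions of cohomology
  have hfr : Module.finrank ℂ (SchwCoh A p q k)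
      = Module.finrank ℂ (SchwCoh A (n - p + 1) (n - q + 1) (2 * n - k - 1)) := by
    omega
  haveI : FiniteDimensional ℂ (SchwCoh A p q k) := by
    unfold SchwCoh; infer_instance
  haveI : FiniteDimensional ℂ (SchwCoh A (n - p + 1) (n - q + 1) (2 * n - k - 1)) := by
    unfold SchwCoh; infer_instance
  have hdual : Module.finrank ℂ (SchwCoh A p q k)
      = Module.finrank ℂ
          (Module.Dual ℂ (SchwCoh A (n - p + 1) (n - q + 1) (2 * n - k - 1))) := by
    rw [Subspace.dual_finrank_eq]; exact hfr
  let φ : SchwCoh A p q k ≃ₗ[ℂ]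
      Module.Dual ℂ (SchwCoh A (n - p + 1) (n - q + 1) (2 * n - k - 1)) :=
    LinearEquiv.ofFinrankEq _ _ hdual
  refine ⟨⟨φ⟩, φ.toLinearMap, ?_, ?_⟩
  · intro x hx
    by_contra hcon
    push_neg at hcon
    exact hx (φ.map_eq_zero_iff.mp (LinearMap.ext hcon))
  · intro y hy
    by_contra hcon
    push_neg at hcon
    apply hy
    rw [← Module.forall_dual_apply_eq_zero_iff ℂ y]
    intro ξ
    obtain ⟨x, rfl⟩ := φ.surjective ξ
    exact hcon x
end

section
/- Let U and W be finite-dimensional complex vector spaces, α ∈ U and β ∈ W nonzero, and a, b ≥ 0. If ω ∈ Λ^a U ⊗ Λ^b W satisfies L_α ω = 0 and L_β ω = 0, then there exists η ∈ Λ^{a−1} U ⊗ Λ^{b−1} W with ω = L_α L_β η. (Exactness of the symbol complex of the Schweitzer complex in the Bott–Chern degree.) -/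
open scoped TensorProduct

variable {U W : Type} [AddCommGroup U] [Module ℂ U] [AddCommGroup W] [Module ℂ W]

/-- Left wedge multiplication `L_α = α ∧ -` on exterior powers. -/
noncomputable def Lmul (α : U) (a : ℕ) : ⋀[ℂ]^a U →ₗ[ℂ] ⋀[ℂ]^(a + 1) U :=
  (LinearMap.mulLeft ℂ (ExteriorAlgebra.ι ℂ α)).restrict fun x hx => by
    have h1 : ExteriorAlgebra.ι ℂ α ∈ ⋀[ℂ]^1 U := by
      show ExteriorAlgebra.ι ℂ α ∈ LinearMap.range (ExteriorAlgebra.ι ℂ (M := U)) ^ 1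
      rw [pow_one]; exact LinearMap.mem_range_self _ α
    exact (Nat.add_comm 1 a) ▸ SetLike.mul_mem_graded h1 hx

lemma Lmul_Lmul (α : U) (a : ℕ) (x : ⋀[ℂ]^a U) :
    Lmul α (a + 1) (Lmul α a x) = 0 := by
  apply Subtype.ext
  show ExteriorAlgebra.ι ℂ α * (ExteriorAlgebra.ι ℂ α * (x : ExteriorAlgebra ℂ U)) = 0
  rw [← mul_assoc, ExteriorAlgebra.ι_sq_zero, zero_mul]

/-- `BX U W r s = Λ^r U ⊗ Λ^s W` for `r, s ≥ 0`, and the zero space otherwise. -/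
noncomputable def BX (U W : Type) [AddCommGroup U] [Module ℂ U] [AddCommGroup W] [Module ℂ W] :
    ℤ → ℤ → Type
  | Int.ofNat a, Int.ofNat b => ⋀[ℂ]^a U ⊗[ℂ] ⋀[ℂ]^b W
  | Int.ofNat _, Int.negSucc _ => PUnit
  | Int.negSucc _, _ => PUnit

noncomputable instance : ∀ r s, AddCommGroup (BX U W r s)
  | Int.ofNat a, Int.ofNat b => inferInstanceAs (AddCommGroup (⋀[ℂ]^a U ⊗[ℂ] ⋀[ℂ]^b W))
  | Int.ofNat _, Int.negSucc _ => inferInstanceAs (AddCommGroup PUnit)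
  | Int.negSucc _, Int.ofNat _ => inferInstanceAs (AddCommGroup PUnit)
  | Int.negSucc _, Int.negSucc _ => inferInstanceAs (AddCommGroup PUnit)

noncomputable instance : ∀ r s, Module ℂ (BX U W r s)
  | Int.ofNat a, Int.ofNat b => inferInstanceAs (Module ℂ (⋀[ℂ]^a U ⊗[ℂ] ⋀[ℂ]^b W))
  | Int.ofNat _, Int.negSucc _ => inferInstanceAs (Module ℂ PUnit)
  | Int.negSucc _, Int.ofNat _ => inferInstanceAs (Module ℂ PUnit)
  | Int.negSucc _, Int.negSucc _ => inferInstanceAs (Module ℂ PUnit)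

/-- The operator `L_α = (α ∧ -) ⊗ id` on `BX U W`. -/
noncomputable def Bd1 (α : U) : ∀ r s, BX U W r s →ₗ[ℂ] BX U W (r + 1) s
  | Int.ofNat a, Int.ofNat b => TensorProduct.map (Lmul α a) (LinearMap.id (M := ⋀[ℂ]^b W))
  | Int.ofNat _, Int.negSucc _ => 0
  | Int.negSucc _, _ => 0

/-- The operator `L_β = id ⊗ (β ∧ -)` on `BX U W`. -/
noncomputable def Bd2u (β : W) : ∀ r s, BX U W r s →ₗ[ℂ] BX U W r (s + 1)
  | Int.ofNat a, Int.ofNat b => TensorProduct.map (LinearMap.id (M := ⋀[ℂ]^a U)) (Lmul β b)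
  | Int.ofNat _, Int.negSucc _ => 0
  | Int.negSucc _, _ => 0

/-- The signed operator `(-1)^r L_β = (-1)^r (id ⊗ (β ∧ -))` on `BX U W`. -/
noncomputable def Bd2s (β : W) : ∀ r s, BX U W r s →ₗ[ℂ] BX U W r (s + 1)
  | Int.ofNat a, Int.ofNat b =>
      ((-1 : ℂ) ^ a) • TensorProduct.map (LinearMap.id (M := ⋀[ℂ]^a U)) (Lmul β b)
  | Int.ofNat _, Int.negSucc _ => 0
  | Int.negSucc _, _ => 0

/-- Transport of `BX` along equalities of the indices. -/
noncomputable def BXcast {r s r' s' : ℤ} (h1 : r = r') (h2 : s = s') :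
    BX U W r s ≃ₗ[ℂ] BX U W r' s' := by
  subst h1; subst h2; exact LinearEquiv.refl ℂ _



section AuxProofs

variable {U W : Type} [AddCommGroup U] [Module ℂ U] [AddCommGroup W] [Module ℂ W]

lemma aux_contract_mem (f : Module.Dual ℂ U) (n : ℕ) :
    ∀ x ∈ ⋀[ℂ]^(n+1) U,
      CliffordAlgebra.contractLeft (Q := (0 : QuadraticForm ℂ U)) f x ∈ ⋀[ℂ]^n U := by
  induction n with
  | zero =>
    intro x hx
    rw [show ⋀[ℂ]^1 U = LinearMap.range (ExteriorAlgebra.ι ℂ (M := U)) ^ 1 from rfl,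
      pow_one] at hx
    obtain ⟨m, rfl⟩ := hx
    rw [show (ExteriorAlgebra.ι ℂ m : ExteriorAlgebra ℂ U)
        = CliffordAlgebra.ι (0 : QuadraticForm ℂ U) m from rfl,
      CliffordAlgebra.contractLeft_ι]
    exact Submodule.algebraMap_mem _
  | succ n ih =>
    intro x hx
    have hx' : x ∈ LinearMap.range (ExteriorAlgebra.ι ℂ (M := U)) ^ 1 *
        (LinearMap.range (ExteriorAlgebra.ι ℂ (M := U)) ^ (n+1)) := by
      rw [pow_one, ← pow_succ']; exact hx
    refine Submodule.mul_induction_on hx' ?_ ?_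
    · rintro c hc b hb
      rw [pow_one] at hc
      obtain ⟨m, rfl⟩ := hc
      rw [show (ExteriorAlgebra.ι ℂ m : ExteriorAlgebra ℂ U)
          = CliffordAlgebra.ι (0 : QuadraticForm ℂ U) m from rfl,
        CliffordAlgebra.contractLeft_ι_mul]
      refine sub_mem (Submodule.smul_mem _ _ hb) ?_
      have h1 : CliffordAlgebra.ι (0 : QuadraticForm ℂ U) m ∈ ⋀[ℂ]^1 U := by
        rw [show ⋀[ℂ]^1 U = LinearMap.range (ExteriorAlgebra.ι ℂ (M := U)) ^ 1 from rfl, pow_one]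
        exact LinearMap.mem_range_self _ m
      exact (Nat.add_comm 1 n) ▸ SetLike.mul_mem_graded h1 (ih b hb)
    · intro c b hc hb
      rw [map_add]; exact add_mem hc hb

/-- Contraction `⋀^{n+1} → ⋀^n`. -/
noncomputable def Cmul (f : Module.Dual ℂ U) (n : ℕ) : ⋀[ℂ]^(n+1) U →ₗ[ℂ] ⋀[ℂ]^n U :=
  (CliffordAlgebra.contractLeft (Q := (0 : QuadraticForm ℂ U)) f).restrict
    (aux_contract_mem f n)

/-- Cartan identity. -/
lemma aux_cartan (f : Module.Dual ℂ U) (α : U) (n : ℕ) (x : ⋀[ℂ]^(n+1) U) :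
    Lmul α n (Cmul f n x) + Cmul f (n+1) (Lmul α (n+1) x) = f α • x := by
  apply Subtype.ext
  show ExteriorAlgebra.ι ℂ α *
      (CliffordAlgebra.contractLeft (Q := (0 : QuadraticForm ℂ U)) f (x : ExteriorAlgebra ℂ U))
    + CliffordAlgebra.contractLeft (Q := (0 : QuadraticForm ℂ U)) f
        (ExteriorAlgebra.ι ℂ α * (x : ExteriorAlgebra ℂ U))
    = f α • (x : ExteriorAlgebra ℂ U)
  rw [show (ExteriorAlgebra.ι ℂ α : ExteriorAlgebra ℂ U)
      = CliffordAlgebra.ι (0 : QuadraticForm ℂ U) α from rfl,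
    CliffordAlgebra.contractLeft_ι_mul]
  abel

lemma aux_exists_dual (α : U) (hα : α ≠ 0) : ∃ f : Module.Dual ℂ U, f α = 1 := by
  have h : ¬ ∀ φ : Module.Dual ℂ U, φ α = 0 := by
    rw [Module.forall_dual_apply_eq_zero_iff ℂ α]; exact hα
  push_neg at h
  obtain ⟨f, hf⟩ := h
  exact ⟨(f α)⁻¹ • f, by simp [inv_mul_cancel₀ hf]⟩

lemma aux_Lmul_zero_inj (α : U) (hα : α ≠ 0) : Function.Injective (Lmul (U := U) α 0) := by
  rw [← LinearMap.ker_eq_bot, eq_bot_iff]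
  intro x hx
  have hx' : ExteriorAlgebra.ι ℂ α * (x : ExteriorAlgebra ℂ U) = 0 :=
    congrArg Subtype.val hx
  have hx0 : (x : ExteriorAlgebra ℂ U) ∈
      (LinearMap.range (ExteriorAlgebra.ι ℂ (M := U)) ^ 0) := x.2
  rw [pow_zero] at hx0
  obtain ⟨c, hc⟩ := Submodule.mem_one.mp hx0
  have : c • ExteriorAlgebra.ι ℂ α = 0 := by
    calc c • ExteriorAlgebra.ι ℂ α
        = algebraMap ℂ (ExteriorAlgebra ℂ U) c * ExteriorAlgebra.ι ℂ α := Algebra.smul_def _ _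
      _ = ExteriorAlgebra.ι ℂ α * algebraMap ℂ (ExteriorAlgebra ℂ U) c := Algebra.commutes _ _
      _ = ExteriorAlgebra.ι ℂ α * (x : ExteriorAlgebra ℂ U) := by rw [hc]
      _ = 0 := hx'
  rcases smul_eq_zero.mp this with h | h
  · have : (x : ExteriorAlgebra ℂ U) = 0 := by rw [← hc, h, map_zero]
    simpa [Submodule.mem_bot] using Subtype.ext this
  · exact absurd (ExteriorAlgebra.ι_inj ℂ α 0 |>.mp (by simpa using h)) hα

set_option maxHeartbeats 1000000 in
set_option synthInstance.maxHeartbeats 1000000 in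
lemma aux_key (α : U) (β : W) (f : Module.Dual ℂ U) (g : Module.Dual ℂ W)
    (hf : f α = 1) (hg : g β = 1) (a b : ℕ)
    (ω : ⋀[ℂ]^(a+1) U ⊗[ℂ] ⋀[ℂ]^(b+1) W)
    (h1 : TensorProduct.map (Lmul α (a+1)) LinearMap.id ω = 0)
    (h2 : TensorProduct.map LinearMap.id (Lmul β (b+1)) ω = 0) :
    ω = TensorProduct.map (Lmul α a) LinearMap.id
      (TensorProduct.map LinearMap.id (Lmul β b)
        (TensorProduct.map (Cmul f a) (Cmul g b) ω)) := by
  have hcf : ∀ x : ⋀[ℂ]^(a+1) U,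
      Lmul α a (Cmul f a x) = x - Cmul f (a+1) (Lmul α (a+1) x) := by
    intro x
    have := aux_cartan f α a x
    rw [hf, one_smul] at this
    exact eq_sub_of_add_eq this
  have hcg : ∀ y : ⋀[ℂ]^(b+1) W,
      Lmul β b (Cmul g b y) = y - Cmul g (b+1) (Lmul β (b+1) y) := by
    intro y
    have := aux_cartan g β b y
    rw [hg, one_smul] at this
    exact eq_sub_of_add_eq this
  have op : (TensorProduct.map (Lmul α a) (LinearMap.id (M := ⋀[ℂ]^(b+1) W))).comp
        ((TensorProduct.map (LinearMap.id (M := ⋀[ℂ]^a U)) (Lmul β b)).comp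
          (TensorProduct.map (Cmul f a) (Cmul g b)))
      + (TensorProduct.map (Cmul f (a+1)) (LinearMap.id (M := ⋀[ℂ]^(b+1) W))).comp
          (TensorProduct.map (Lmul α (a+1)) (LinearMap.id (M := ⋀[ℂ]^(b+1) W)))
      + (TensorProduct.map (LinearMap.id (M := ⋀[ℂ]^(a+1) U)) (Cmul g (b+1))).comp
          (TensorProduct.map (LinearMap.id (M := ⋀[ℂ]^(a+1) U)) (Lmul β (b+1)))
      = LinearMap.id
      + (TensorProduct.map (Cmul f (a+1)) (Cmul g (b+1))).comp
          ((TensorProduct.map (LinearMap.id (M := ⋀[ℂ]^(a+1+1) U)) (Lmul β (b+1))).comp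
            (TensorProduct.map (Lmul α (a+1)) (LinearMap.id (M := ⋀[ℂ]^(b+1) W)))) := by
    apply TensorProduct.ext'
    intro x y
    simp only [LinearMap.comp_apply, TensorProduct.map_tmul, LinearMap.id_apply,
      LinearMap.add_apply]
    rw [hcf x, hcg y, TensorProduct.sub_tmul, TensorProduct.tmul_sub,
      TensorProduct.tmul_sub]
    abel
  have hop := LinearMap.congr_fun op ω
  simp only [LinearMap.comp_apply, LinearMap.id_apply, LinearMap.add_apply,
    h1, h2, map_zero, add_zero] at hop
  exact hop.symm


lemma BXcast_trans {r s r' s' r'' s'' : ℤ} (h1 : r = r') (h2 : s = s')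
    (h3 : r' = r'') (h4 : s' = s'') (x : BX U W r s) :
    BXcast h3 h4 (BXcast h1 h2 x) = BXcast (h1.trans h3) (h2.trans h4) x := by
  subst h1; subst h2; subst h3; subst h4; rfl

lemma Bd1_cast (α : U) {r r' s s' : ℤ} (h1 : r = r') (h2 : s = s') (x : BX U W r s) :
    Bd1 α r' s' (BXcast h1 h2 x)
      = BXcast (by rw [h1]) h2 (Bd1 α r s x) := by
  subst h1; subst h2; rfl

lemma Bd2u_cast (β : W) {r r' s s' : ℤ} (h1 : r = r') (h2 : s = s') (x : BX U W r s) :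
    Bd2u β r' s' (BXcast h1 h2 x)
      = BXcast h1 (by rw [h2]) (Bd2u β r s x) := by
  subst h1; subst h2; rfl

end AuxProofs

set_option synthInstance.maxHeartbeats 1000000
set_option maxHeartbeats 1000000

/-- Exactness of the symbol complex of the Schweitzer complex in the Bott–Chern degree:
if `ω ∈ Λ^a U ⊗ Λ^b W` satisfies `L_α ω = 0` and `L_β ω = 0` (for `α, β` nonzero), then
`ω = L_α L_β η` for some `η ∈ Λ^{a-1} U ⊗ Λ^{b-1} W`. -/
theorem symbol_exact_bott_chern_degree (U W : Type) [AddCommGroup U] [Module ℂ U]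
    [AddCommGroup W] [Module ℂ W] [FiniteDimensional ℂ U] [FiniteDimensional ℂ W]
    (α : U) (β : W) (hα : α ≠ 0) (hβ : β ≠ 0) (a b : ℤ) (ha : 0 ≤ a) (hb : 0 ≤ b)
    (ω : BX U W a b) (h1 : Bd1 α a b ω = 0) (h2 : Bd2u β a b ω = 0) :
    ∃ η : BX U W (a - 1) (b - 1),
      ω = BXcast (show a - 1 + 1 = a by omega) (show b - 1 + 1 = b by omega)
        (Bd1 α (a - 1) (b - 1 + 1) (Bd2u β (a - 1) (b - 1) η)) := by
  obtain ⟨a', rfl⟩ := Int.eq_ofNat_of_zero_le ha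
  obtain ⟨b', rfl⟩ := Int.eq_ofNat_of_zero_le hb
  obtain ⟨f, hf⟩ := aux_exists_dual α hα
  obtain ⟨g, hg⟩ := aux_exists_dual β hβ
  cases a' with
  | zero =>
    -- `L_α` is injective on `⋀^0`, so `ω = 0`.
    have h1' : TensorProduct.map (Lmul α 0) (LinearMap.id (M := ⋀[ℂ]^b' W)) ω = 0 := h1
    obtain ⟨gl, hgl⟩ := (Lmul α 0).exists_leftInverse_of_injective
      (LinearMap.ker_eq_bot.mpr (aux_Lmul_zero_inj α hα))
    have hω0 : ω = 0 := by
      have := congrArg (TensorProduct.map gl (LinearMap.id (M := ⋀[ℂ]^b' W))) h1'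
      have key : ∀ z : ⋀[ℂ]^0 U ⊗[ℂ] ⋀[ℂ]^b' W, TensorProduct.map gl (LinearMap.id (M := ⋀[ℂ]^b' W))
          (TensorProduct.map (Lmul α 0) (LinearMap.id (M := ⋀[ℂ]^b' W)) z) = z := by
        intro z
        rw [← LinearMap.comp_apply, ← TensorProduct.map_comp, hgl,
          LinearMap.id_comp, TensorProduct.map_id, LinearMap.id_apply]
      rw [map_zero] at this
      exact (key ω).symm.trans this
    refine ⟨0, ?_⟩
    rw [map_zero, map_zero, map_zero, hω0]
  | succ a'' =>
    cases b' with
    | zero =>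
      have h2' : TensorProduct.map (LinearMap.id (M := ⋀[ℂ]^(a''+1) U)) (Lmul β 0) ω = 0 := h2
      obtain ⟨gl, hgl⟩ := (Lmul β 0).exists_leftInverse_of_injective
        (LinearMap.ker_eq_bot.mpr (aux_Lmul_zero_inj β hβ))
      have hω0 : ω = 0 := by
        have := congrArg (TensorProduct.map (LinearMap.id (M := ⋀[ℂ]^(a''+1) U)) gl) h2'
        have key : ∀ z : ⋀[ℂ]^(a''+1) U ⊗[ℂ] ⋀[ℂ]^0 W,
            TensorProduct.map (LinearMap.id (M := ⋀[ℂ]^(a''+1) U)) gl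
              (TensorProduct.map (LinearMap.id (M := ⋀[ℂ]^(a''+1) U)) (Lmul β 0) z) = z := by
          intro z
          rw [← LinearMap.comp_apply, ← TensorProduct.map_comp, hgl,
            LinearMap.id_comp, TensorProduct.map_id, LinearMap.id_apply]
        rw [map_zero] at this
        exact (key ω).symm.trans this
      refine ⟨0, ?_⟩
      rw [map_zero, map_zero, map_zero, hω0]
    | succ b'' =>
      have e1 : (↑(a'' + 1) : ℤ) - 1 = ↑a'' := by omega
      have e2 : (↑(b'' + 1) : ℤ) - 1 = ↑b'' := by omega
      have hη₀ := aux_key α β f g hf hg a'' b'' ω h1 h2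
      obtain ⟨ζ, hζ⟩ : ∃ ζ : BX U W (a'' : ℤ) (b'' : ℤ),
          TensorProduct.map (Cmul f a'') (Cmul g b'') ω = ζ := ⟨_, rfl⟩
      refine ⟨BXcast e1.symm e2.symm ζ, ?_⟩
      rw [Bd2u_cast, Bd1_cast, BXcast_trans]
      subst hζ
      exact hη₀
end
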